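/- arXiv:2007.10920 — 5 statements merged into one kernel-verified Lean document; each statement's English description precedes it below -/
import Mathlib

section
/- The Schwarzschild conformal factor centered at c has the asymptotic expansion (1 + m/(2|x−c|))⁴ = 1 + 2m/|x| + 2m(c·x)/|x|³ + 3m²/(2|x|²) + O(|x|^{−3}) as |x| → ∞; that is, the difference of the two sides is bounded by a constant times |x|^{−3} for all large |x|. -/
set_option maxHeartbeats 1000000

open Real

noncomputable section

abbrev E3 := EuclideanSpace ℝ (Fin 3)


lemma key_expansion (m k r s u : ℝ) (hk : 0 ≤ k) (hr : 2 ≤ r) (hrk : 2*k ≤ r)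
    (hs2 : s^2 = r^2 - 2*u + k^2) (hs1 : r/2 ≤ s) (hs3 : s ≤ r + k) (hu : |u| ≤ k*r) :
    |(1 + m/(2*s))^4 - (1 + 2*m/r + 2*m*u/r^3 + 3*m^2/(2*r^2))| ≤
      (40* |m| *k^2 + 15*m^2*k + 4* |m|^3 + m^4) / r^3 := by
  have hr0 : (0:ℝ) < r := by linarith
  have hs0 : (0:ℝ) < s := by linarith
  have hu1 := abs_le.mp hu
  -- |r - s| ≤ 2k
  have h1 : (r - s)*(r + s) = 2*u - k^2 := by linear_combination -hs2
  have habs : |r - s| ≤ 2*k := by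
    rw [abs_le]; constructor <;> nlinarith [hu1.1, hu1.2]
  have hsq : (r-s)^2 ≤ 4*k^2 := by
    nlinarith [sq_abs (r-s), mul_self_le_mul_self (abs_nonneg (r-s)) habs]
  -- bound A
  have hidA : r^3 - s*r^2 - u*s = ((r-s)^2*(2*r+s) - k^2*s)/2 := by
    linear_combination (-s/2) * hs2
  have hkeyA : |r^3 - s*r^2 - u*s| ≤ 20*k^2*s := by
    have h2 : (0:ℝ) ≤ (r-s)^2*(2*r+s) := by positivity
    have h3 : (r-s)^2*(2*r+s) ≤ 20*k^2*s := by nlinarith [sq_nonneg (r-s)]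
    rw [abs_le]; constructor <;> nlinarith
  have hA : |1/s - 1/r - u/r^3| ≤ 20*k^2/r^3 := by
    have hid : 1/s - 1/r - u/r^3 = (r^3 - s*r^2 - u*s)/(s*r^3) := by
      field_simp
    rw [hid, abs_div, abs_of_pos (by positivity : (0:ℝ) < s*r^3)]
    rw [div_le_div_iff₀ (by positivity) (by positivity)]
    calc |r^3 - s*r^2 - u*s| * r^3 ≤ (20*k^2*s) * r^3 := by
          exact mul_le_mul_of_nonneg_right hkeyA (by positivity)
      _ = 20*k^2/1 * (s*r^3) := by ring
      _ = 20*k^2 * (s*r^3) := by ring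
  -- bound B
  have hB : |1/s^2 - 1/r^2| ≤ 10*k/r^3 := by
    have hid : 1/s^2 - 1/r^2 = (2*u - k^2)/(s^2*r^2) := by
      rw [div_sub_div _ _ (by positivity : (0:ℝ) < s^2).ne' (by positivity : (0:ℝ) < r^2).ne',
        show (1:ℝ)*r^2 - s^2*1 = 2*u - k^2 from by linarith]
    rw [hid, abs_div, abs_of_pos (by positivity : (0:ℝ) < s^2*r^2)]
    rw [div_le_div_iff₀ (by positivity) (by positivity)]
    have hnum : |2*u - k^2| ≤ (5/2)*k*r := by
      rw [abs_le]; constructor <;> nlinarith [hu1.1, hu1.2]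
    have hs4 : r^2/4 ≤ s^2 := by nlinarith [mul_le_mul hs1 hs1 (by linarith : (0:ℝ) ≤ r/2) hs0.le]
    nlinarith [mul_le_mul_of_nonneg_right hnum (by positivity : (0:ℝ) ≤ r^3),
      mul_le_mul_of_nonneg_left hs4 (by positivity : (0:ℝ) ≤ 10*k*r^2)]
  -- bound C
  have hC : |m^3/(2*s^3)| ≤ 4* |m|^3/r^3 := by
    rw [abs_div, abs_of_pos (by positivity : (0:ℝ) < 2*s^3)]
    rw [div_le_div_iff₀ (by positivity) (by positivity)]
    have h8 : r^3 ≤ 8*s^3 := by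
      calc r^3 ≤ (2*s)^3 := by apply pow_le_pow_left₀ hr0.le (by linarith)
        _ = 8*s^3 := by ring
    rw [abs_pow]
    nlinarith [mul_le_mul_of_nonneg_left h8 (pow_nonneg (abs_nonneg m) 3)]
  have hD : |m^4/(16*s^4)| ≤ m^4/(2*r^3) := by
    rw [abs_div, abs_of_pos (by positivity : (0:ℝ) < 16*s^4)]
    rw [div_le_div_iff₀ (by positivity) (by positivity)]
    have h16 : r^4 ≤ 16*s^4 := by
      calc r^4 ≤ (2*s)^4 := by apply pow_le_pow_left₀ hr0.le (by linarith)
        _ = 16*s^4 := by ring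
    have hm4 : |m^4| = m^4 := abs_of_nonneg (by positivity)
    have hr3r4 : 2*r^3 ≤ r^4 := by nlinarith [mul_le_mul_of_nonneg_right hr (pow_nonneg hr0.le 3)]
    have h4 : (0:ℝ) ≤ m^4 := by positivity
    rw [hm4]
    nlinarith [mul_le_mul_of_nonneg_left hr3r4 h4, mul_le_mul_of_nonneg_left h16 h4]
  -- main identity
  have hmain : (1 + m/(2*s))^4 - (1 + 2*m/r + 2*m*u/r^3 + 3*m^2/(2*r^2))
      = 2*m*(1/s - 1/r - u/r^3) + (3/2)*m^2*(1/s^2 - 1/r^2) + m^3/(2*s^3) + m^4/(16*s^4) := by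
    field_simp; ring
  rw [hmain]
  have t1 : |2*m*(1/s - 1/r - u/r^3)| ≤ 40* |m| *k^2/r^3 := by
    rw [abs_mul]
    calc |2*m| * |1/s - 1/r - u/r^3| ≤ (2* |m|) * (20*k^2/r^3) := by
          apply mul_le_mul _ hA (abs_nonneg _) (by positivity)
          rw [abs_mul]; simp
      _ = 40* |m| *k^2/r^3 := by ring
  have t2 : |(3/2)*m^2*(1/s^2 - 1/r^2)| ≤ 15*m^2*k/r^3 := by
    rw [abs_mul]
    calc |(3/2)*m^2| * |1/s^2 - 1/r^2| ≤ ((3/2)*m^2) * (10*k/r^3) := by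
          apply mul_le_mul _ hB (abs_nonneg _) (by positivity)
          rw [abs_of_nonneg (by positivity)]
      _ = 15*m^2*k/r^3 := by ring
  calc |2*m*(1/s - 1/r - u/r^3) + (3/2)*m^2*(1/s^2 - 1/r^2) + m^3/(2*s^3) + m^4/(16*s^4)|
      ≤ |2*m*(1/s - 1/r - u/r^3) + (3/2)*m^2*(1/s^2 - 1/r^2) + m^3/(2*s^3)| + |m^4/(16*s^4)| :=
        abs_add_le _ _
    _ ≤ (|2*m*(1/s - 1/r - u/r^3) + (3/2)*m^2*(1/s^2 - 1/r^2)| + |m^3/(2*s^3)|) + |m^4/(16*s^4)| := by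
        gcongr; exact abs_add_le _ _
    _ ≤ ((|2*m*(1/s - 1/r - u/r^3)| + |(3/2)*m^2*(1/s^2 - 1/r^2)|) + |m^3/(2*s^3)|) + |m^4/(16*s^4)| := by
        gcongr; exact abs_add_le _ _
    _ ≤ (40* |m| *k^2/r^3 + 15*m^2*k/r^3 + 4* |m|^3/r^3) + m^4/(2*r^3) := by
        gcongr
    _ = (40* |m| *k^2 + 15*m^2*k + 4* |m|^3 + m^4/2) / r^3 := by ring
    _ ≤ (40* |m| *k^2 + 15*m^2*k + 4* |m|^3 + m^4) / r^3 := by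
        have h4 : (0:ℝ) ≤ m^4 := by positivity
        apply div_le_div_of_nonneg_right ?_ (by positivity)
        linarith


/-- the Schwarzschild conformal factor centered at `c` satisfies
`(1 + m/(2|x−c|))⁴ = 1 + 2m/|x| + 2m(c·x)/|x|³ + 3m²/(2|x|²) + O(|x|^{−3})` as `|x| → ∞`. -/
theorem schwarzschild_conformal_factor_expansion (m : ℝ) (c : E3) :
    ∃ C R : ℝ, ∀ x : E3, R ≤ ‖x‖ →
      |(1 + m / (2 * ‖x - c‖)) ^ 4 -
          (1 + 2 * m / ‖x‖ + 2 * m * (∑ i, c i * x i) / ‖x‖ ^ 3 +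
            3 * m ^ 2 / (2 * ‖x‖ ^ 2))| ≤
        C / ‖x‖ ^ 3 := by
  refine ⟨40* |m| * ‖c‖^2 + 15*m^2*‖c‖ + 4* |m|^3 + m^4, 2*‖c‖ + 2, fun x hx => ?_⟩
  have hk : (0:ℝ) ≤ ‖c‖ := norm_nonneg c
  have hu' : (∑ i, c i * x i) = inner ℝ c x := by simp [PiLp.inner_apply, mul_comm]
  have hs2 : ‖x - c‖^2 = ‖x‖^2 - 2*(inner ℝ c x : ℝ) + ‖c‖^2 := by
    rw [norm_sub_sq_real, real_inner_comm]
  have hu : |(inner ℝ c x : ℝ)| ≤ ‖c‖ * ‖x‖ := abs_real_inner_le_norm c x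
  have hlow : ‖x‖ - ‖c‖ ≤ ‖x - c‖ := norm_sub_norm_le x c
  have hhigh : ‖x - c‖ ≤ ‖x‖ + ‖c‖ := norm_sub_le x c
  rw [hu']
  exact key_expansion m ‖c‖ ‖x‖ ‖x - c‖ (inner ℝ c x) hk (by linarith) (by linarith)
    hs2 (by linarith) hhigh hu
end
end

section
/- The conformal factor ξ(x) = 1 + (∇f(x)·(x−a))/(2 f(x)) satisfies the expansion ξ(x) = 1 − m/ρ + (2m² − γ₂)/ρ² + 2m (x·a)/ρ³ − γ₁ (x·c)/ρ³ + O(ρ^{−3}) as |x| → ∞, where ρ = |x−a|; that is, the difference of the two sides is bounded by a constant times ρ^{−3} for all large |x|. -/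
open Real

noncomputable section

open RealInnerProductSpace

set_option maxHeartbeats 1000000

lemma abs_mul_le' {a b A B : ℝ} (ha : |a| ≤ A) (hb : |b| ≤ B) : |a*b| ≤ A*B := by
  rw [abs_mul]
  exact mul_le_mul ha hb (abs_nonneg b) (le_trans (abs_nonneg a) ha)

lemma abs_sub'' (a b : ℝ) : |a - b| ≤ |a| + |b| := by
  rw [sub_eq_add_neg]
  simpa using abs_add_le a (-b)

lemma abs_add3 (a b c : ℝ) : |a + b + c| ≤ |a| + |b| + |c| := by
  have h1 := abs_add_le (a+b) c
  have h2 := abs_add_le a b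
  linarith

lemma abs_add4 (a b c d : ℝ) : |a + b + c + d| ≤ |a| + |b| + |c| + |d| := by
  have h1 := abs_add_le (a+b+c) d
  have h2 := abs_add3 a b c
  linarith

lemma abs_add5 (a b c d e : ℝ) : |a + b + c + d + e| ≤ |a| + |b| + |c| + |d| + |e| := by
  have h1 := abs_add_le (a+b+c+d) e
  have h2 := abs_add4 a b c d
  linarith

lemma DG_bound (m γ₁ γ₂ K r s t u : ℝ)
    (hK : 1 ≤ K) (hm : |m| ≤ K) (hg1 : |γ₁| ≤ K) (hg2 : |γ₂| ≤ K)
    (hr : 20*K^2 ≤ r)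
    (hs : |s| ≤ K*r) (ht : |t| ≤ K*r) (hu : |u| ≤ K^2) :
    |(-2*m*(r^2-s)/r^3 + γ₁*((t-u)/r^3 - 3*t*(r^2-s)/r^5) - 2*γ₂*(r^2-s)/r^4)
      - 2*(1 + 2*m/r + γ₁*t/r^3 + γ₂/r^2)
        * (-m/r + (2*m^2-γ₂)/r^2 + (m*s-γ₁*t)/r^3)| ≤ 100*K^4/r^3 := by
  have hK0 : (0:ℝ) < K := by linarith
  have hKK : K ≤ K^2 := by nlinarith
  have hK23 : K^2 ≤ K^3 := by nlinarith
  have hK34 : K^3 ≤ K^4 := by nlinarith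
  have hr0 : (0:ℝ) < r := by nlinarith
  have hr1 : (1:ℝ) ≤ r := by nlinarith
  have hrne : r ≠ 0 := ne_of_gt hr0
  have h8 : |(8:ℝ)| ≤ 8 := by norm_num
  have h6 : |(6:ℝ)| ≤ 6 := by norm_num
  have h2' : |(2:ℝ)| ≤ 2 := by norm_num
  have h3' : |(3:ℝ)| ≤ 3 := by norm_num
  have h4' : |(4:ℝ)| ≤ 4 := by norm_num
  have hid : (-2*m*(r^2-s)/r^3 + γ₁*((t-u)/r^3 - 3*t*(r^2-s)/r^5) - 2*γ₂*(r^2-s)/r^4)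
      - 2*(1 + 2*m/r + γ₁*t/r^3 + γ₂/r^2)
        * (-m/r + (2*m^2-γ₂)/r^2 + (m*s-γ₁*t)/r^3)
      = (-(γ₁*u) + -(8*(m*m*m)) + 6*(m*γ₂))/r^3
        + (2*(γ₂*s) + -(4*(m*m*s)) + 6*(m*(γ₁*t)) + -(4*(m*(m*γ₂))) + 2*(γ₂*γ₂))/r^4
        + (3*(γ₁*(t*s)) + -(2*(m*(γ₂*s))) + 4*(γ₁*(γ₂*t)) + -(4*(m*(m*(γ₁*t)))))/r^5
        + (-(2*(m*(γ₁*(t*s)))) + 2*(γ₁*(γ₁*(t*t))))/r^6 := by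
    field_simp
    ring
  rw [hid]
  clear hid
  have hP3 : |(-(γ₁*u) + -(8*(m*m*m)) + 6*(m*γ₂))| ≤ 15*K^3 := by
    refine le_trans (abs_add3 _ _ _) ?_
    simp only [abs_neg]
    have b1 : |γ₁*u| ≤ K*K^2 := abs_mul_le' hg1 hu
    have b2 : |8*(m*m*m)| ≤ 8*(K*K*K) := abs_mul_le' h8 (abs_mul_le' (abs_mul_le' hm hm) hm)
    have b3 : |6*(m*γ₂)| ≤ 6*(K*K) := abs_mul_le' h6 (abs_mul_le' hm hg2)
    have hfin : K*K^2 + 8*(K*K*K) + 6*(K*K) ≤ 15*K^3 := by nlinarith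
    linarith
  have hP4 : |(2*(γ₂*s) + -(4*(m*m*s)) + 6*(m*(γ₁*t)) + -(4*(m*(m*γ₂))) + 2*(γ₂*γ₂))|
      ≤ 18*K^3*r := by
    refine le_trans (abs_add5 _ _ _ _ _) ?_
    simp only [abs_neg]
    have b1 : |2*(γ₂*s)| ≤ 2*(K*(K*r)) := abs_mul_le' h2' (abs_mul_le' hg2 hs)
    have b2 : |4*(m*m*s)| ≤ 4*(K*K*(K*r)) := abs_mul_le' h4' (abs_mul_le' (abs_mul_le' hm hm) hs)
    have b3 : |6*(m*(γ₁*t))| ≤ 6*(K*(K*(K*r))) := abs_mul_le' h6 (abs_mul_le' hm (abs_mul_le' hg1 ht))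
    have b4 : |4*(m*(m*γ₂))| ≤ 4*(K*(K*K)) := abs_mul_le' h4' (abs_mul_le' hm (abs_mul_le' hm hg2))
    have b5 : |2*(γ₂*γ₂)| ≤ 2*(K*K) := abs_mul_le' h2' (abs_mul_le' hg2 hg2)
    have f1 : K^2*r ≤ K^3*r := mul_le_mul_of_nonneg_right hK23 (le_of_lt hr0)
    have f2 : K^3 ≤ K^3*r := le_mul_of_one_le_right (by positivity) hr1
    have f3 : K^2 ≤ K^3*r := le_trans hK23 f2
    nlinarith [f1, f2, f3]
  have hP5 : |(3*(γ₁*(t*s)) + -(2*(m*(γ₂*s))) + 4*(γ₁*(γ₂*t)) + -(4*(m*(m*(γ₁*t)))))|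
      ≤ 13*K^4*r^2 := by
    refine le_trans (abs_add4 _ _ _ _) ?_
    simp only [abs_neg]
    have b1 : |3*(γ₁*(t*s))| ≤ 3*(K*(K*r*(K*r))) := abs_mul_le' h3' (abs_mul_le' hg1 (abs_mul_le' ht hs))
    have b2 : |2*(m*(γ₂*s))| ≤ 2*(K*(K*(K*r))) := abs_mul_le' h2' (abs_mul_le' hm (abs_mul_le' hg2 hs))
    have b3 : |4*(γ₁*(γ₂*t))| ≤ 4*(K*(K*(K*r))) := abs_mul_le' h4' (abs_mul_le' hg1 (abs_mul_le' hg2 ht))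
    have b4 : |4*(m*(m*(γ₁*t)))| ≤ 4*(K*(K*(K*(K*r)))) :=
      abs_mul_le' h4' (abs_mul_le' hm (abs_mul_le' hm (abs_mul_le' hg1 ht)))
    have hKr1 : 1 ≤ K*r := by nlinarith
    have f1 : K^3*r ≤ K^4*r^2 := by
      nlinarith [mul_le_mul_of_nonneg_left hKr1 (show (0:ℝ) ≤ K^3*r by positivity)]
    have f2 : K^4*r ≤ K^4*r^2 := by
      nlinarith [mul_le_mul_of_nonneg_left hr1 (show (0:ℝ) ≤ K^4*r by positivity)]
    have f3 : K^3*r^2 ≤ K^4*r^2 := mul_le_mul_of_nonneg_right hK34 (by positivity)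
    nlinarith [f1, f2, f3]
  have hP6 : |(-(2*(m*(γ₁*(t*s)))) + 2*(γ₁*(γ₁*(t*t))))| ≤ 4*K^4*r^2 := by
    refine le_trans (abs_add_le _ _) ?_
    simp only [abs_neg]
    have b1 : |2*(m*(γ₁*(t*s)))| ≤ 2*(K*(K*(K*r*(K*r)))) :=
      abs_mul_le' h2' (abs_mul_le' hm (abs_mul_le' hg1 (abs_mul_le' ht hs)))
    have b2 : |2*(γ₁*(γ₁*(t*t)))| ≤ 2*(K*(K*(K*r*(K*r)))) :=
      abs_mul_le' h2' (abs_mul_le' hg1 (abs_mul_le' hg1 (abs_mul_le' ht ht)))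
    nlinarith
  refine le_trans (abs_add4 _ _ _ _) ?_
  rw [abs_div, abs_div, abs_div, abs_div,
    abs_of_pos (show (0:ℝ) < r^3 by positivity),
    abs_of_pos (show (0:ℝ) < r^4 by positivity),
    abs_of_pos (show (0:ℝ) < r^5 by positivity),
    abs_of_pos (show (0:ℝ) < r^6 by positivity)]
  have d3 : |(-(γ₁*u) + -(8*(m*m*m)) + 6*(m*γ₂))|/r^3 ≤ 15*K^3/r^3 := by gcongr
  have d4 : |(2*(γ₂*s) + -(4*(m*m*s)) + 6*(m*(γ₁*t)) + -(4*(m*(m*γ₂))) + 2*(γ₂*γ₂))|/r^4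
      ≤ 18*K^3/r^3 := by
    refine le_trans (by gcongr : _ ≤ (18*K^3*r)/r^4) (le_of_eq ?_)
    field_simp
  have d5 : |(3*(γ₁*(t*s)) + -(2*(m*(γ₂*s))) + 4*(γ₁*(γ₂*t)) + -(4*(m*(m*(γ₁*t)))))|/r^5
      ≤ 13*K^4/r^3 := by
    refine le_trans (by gcongr : _ ≤ (13*K^4*r^2)/r^5) (le_of_eq ?_)
    field_simp
  have d6 : |(-(2*(m*(γ₁*(t*s)))) + 2*(γ₁*(γ₁*(t*t))))|/r^6 ≤ 4*K^4/r^3 := by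
    refine le_trans (by gcongr : _ ≤ (4*K^4*r^2)/r^6) ?_
    have he : 4*K^4*r^2/r^6 = 4*K^4/r^4 := by
      field_simp
    rw [he]
    have hr34 : r^3 ≤ r^4 := by
      nlinarith [pow_pos hr0 3]
    exact div_le_div_of_nonneg_left (by positivity) (by positivity) hr34
  have hsum : 15*K^3/r^3 + 18*K^3/r^3 + 13*K^4/r^3 + 4*K^4/r^3 ≤ 100*K^4/r^3 := by
    rw [← add_div, ← add_div, ← add_div]
    gcongr
    nlinarith
  linarith only [d3, d4, d5, d6, hsum]

-- sub-bound (a)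
lemma sub_a (A K r ρ s : ℝ)
    (hK : 1 ≤ K) (hA0 : 0 ≤ A) (hAK : A ≤ K)
    (hr : 20*K^2 ≤ r)
    (hs : |s| ≤ K*r)
    (hρl : r - A ≤ ρ) (hρu : ρ ≤ r + A)
    (hρ2 : ρ^2 = r^2 - 2*s + A^2) :
    |1/ρ - 1/r - s/r^3| ≤ 10*K^2/r^3 := by
  have hK0 : (0:ℝ) < K := by linarith
  have hKK : K ≤ K^2 := by nlinarith
  have hr0 : (0:ℝ) < r := by nlinarith
  have hr1 : (1:ℝ) ≤ r := by nlinarith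
  have hKr : K ≤ r/2 := by nlinarith
  have hρh : r/2 ≤ ρ := by linarith
  have hρ0 : (0:ℝ) < ρ := by linarith
  have hrρ : |r - ρ| ≤ K := abs_le.mpr ⟨by linarith, by linarith⟩
  have hsub : r^2 - ρ^2 = 2*s - A^2 := by linarith
  have hid : 1/ρ - 1/r - s/r^3
      = (s*(r-ρ)*(2*r+ρ) - A^2*r^2)/(ρ*r^3*(r+ρ)) := by
    have h1 : 1/ρ - 1/r = (r^2-ρ^2)/(ρ*r*(r+ρ)) := by
      field_simp
      ring
    rw [h1, hsub]
    field_simp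
    ring
  have h2rρ : |2*r+ρ| ≤ 4*r := abs_le.mpr ⟨by linarith, by linarith⟩
  have hnum : |s*(r-ρ)*(2*r+ρ) - A^2*r^2| ≤ 5*K^2*r^2 := by
    have h1 : |s*(r-ρ)*(2*r+ρ)| ≤ K*r*K*(4*r) := abs_mul_le' (abs_mul_le' hs hrρ) h2rρ
    have h2 : |A^2*r^2| ≤ K^2*r^2 := by
      rw [abs_of_nonneg (by positivity)]
      have := pow_le_pow_left₀ hA0 hAK 2
      nlinarith
    have h3 := abs_sub'' (s*(r-ρ)*(2*r+ρ)) (A^2*r^2)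
    nlinarith
  have hden : (0:ℝ) < ρ*r^3*(r+ρ) := by positivity
  rw [hid, abs_div, abs_of_pos hden, div_le_div_iff₀ hden (by positivity)]
  have e1 : |s*(r-ρ)*(2*r+ρ) - A^2*r^2| * r^3 ≤ 5*K^2*r^2 * r^3 :=
    mul_le_mul_of_nonneg_right hnum (by positivity)
  have p1 : r/2 * r ≤ ρ * (r+ρ) := by
    nlinarith [mul_nonneg (by linarith : (0:ℝ) ≤ ρ - r/2) (by linarith : (0:ℝ) ≤ r + ρ)]
  have e2 : 5*K^2*r^2*r^3 ≤ 10*K^2*(ρ*r^3*(r+ρ)) := by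
    nlinarith [mul_le_mul_of_nonneg_left p1 (show (0:ℝ) ≤ 10*K^2*r^3 by positivity)]
  linarith

-- sub-bound (b)
lemma sub_b (A K r ρ s : ℝ)
    (hK : 1 ≤ K) (hA0 : 0 ≤ A) (hAK : A ≤ K)
    (hr : 20*K^2 ≤ r)
    (hs : |s| ≤ K*r)
    (hρl : r - A ≤ ρ) (hρu : ρ ≤ r + A)
    (hρ2 : ρ^2 = r^2 - 2*s + A^2) :
    |1/ρ^2 - 1/r^2| ≤ 12*K/r^3 := by
  have hK0 : (0:ℝ) < K := by linarith
  have hKK : K ≤ K^2 := by nlinarith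
  have hr0 : (0:ℝ) < r := by nlinarith
  have hr1 : (1:ℝ) ≤ r := by nlinarith
  have hKr : K ≤ r/2 := by nlinarith
  have hρh : r/2 ≤ ρ := by linarith
  have hρ0 : (0:ℝ) < ρ := by linarith
  have hsub : r^2 - ρ^2 = 2*s - A^2 := by linarith
  have hid : 1/ρ^2 - 1/r^2 = (2*s - A^2)/(ρ^2*r^2) := by
    have h1 : 1/ρ^2 - 1/r^2 = (r^2-ρ^2)/(ρ^2*r^2) := by
      field_simp
    rw [h1, hsub]
  have hnum : |2*s - A^2| ≤ 3*K*r := by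
    have h2 : |A^2| ≤ K^2 := by
      rw [abs_of_nonneg (by positivity)]
      nlinarith
    have h3 := abs_sub'' (2*s) (A^2)
    have h4 : |2*s| = 2*|s| := by
      rw [abs_mul]; norm_num
    nlinarith
  have hden : (0:ℝ) < ρ^2*r^2 := by positivity
  rw [hid, abs_div, abs_of_pos hden, div_le_div_iff₀ hden (by positivity)]
  have e1 : |2*s - A^2| * r^3 ≤ 3*K*r*r^3 := mul_le_mul_of_nonneg_right hnum (by positivity)
  have p1 : r/2*(r/2) ≤ ρ*ρ := by
    nlinarith [mul_nonneg (by linarith : (0:ℝ) ≤ ρ - r/2) (by linarith : (0:ℝ) ≤ ρ + r/2)]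
  have e2 : 3*K*r*r^3 ≤ 12*K*(ρ^2*r^2) := by
    nlinarith [mul_le_mul_of_nonneg_left p1 (show (0:ℝ) ≤ 12*K*r^2 by positivity)]
  linarith

-- sub-bound (c)
lemma sub_c (A K r ρ s w : ℝ)
    (hK : 1 ≤ K) (hA0 : 0 ≤ A) (hAK : A ≤ K)
    (hr : 20*K^2 ≤ r)
    (hρl : r - A ≤ ρ) (hρu : ρ ≤ r + A)
    (hw : |w| ≤ K*r) :
    |w/ρ^3 - w/r^3| ≤ 72*K^2/r^3 := by
  have hK0 : (0:ℝ) < K := by linarith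
  have hKK : K ≤ K^2 := by nlinarith
  have hr0 : (0:ℝ) < r := by nlinarith
  have hr1 : (1:ℝ) ≤ r := by nlinarith
  have hKr : K ≤ r/2 := by nlinarith
  have hρh : r/2 ≤ ρ := by linarith
  have hρ0 : (0:ℝ) < ρ := by linarith
  have hrρ : |r - ρ| ≤ K := abs_le.mpr ⟨by linarith, by linarith⟩
  have hid : w/ρ^3 - w/r^3 = w*(r-ρ)*(r^2+r*ρ+ρ^2)/(ρ^3*r^3) := by
    field_simp
    ring
  have hquad : |r^2+r*ρ+ρ^2| ≤ 7*r^2 := by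
    rw [abs_of_nonneg (by positivity)]
    nlinarith [sq_nonneg ρ, sq_nonneg (ρ - 2*r)]
  have hnum : |w*(r-ρ)*(r^2+r*ρ+ρ^2)| ≤ K*r*K*(7*r^2) :=
    abs_mul_le' (abs_mul_le' hw hrρ) hquad
  have hden : (0:ℝ) < ρ^3*r^3 := by positivity
  rw [hid, abs_div, abs_of_pos hden, div_le_div_iff₀ hden (by positivity)]
  have e1 : |w*(r-ρ)*(r^2+r*ρ+ρ^2)| * r^3 ≤ K*r*K*(7*r^2)*r^3 :=
    mul_le_mul_of_nonneg_right hnum (by positivity)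
  have p1 : (r/2)^3 ≤ ρ^3 := by
    apply pow_le_pow_left₀ (by linarith) hρh
  have e2 : K*r*K*(7*r^2)*r^3 ≤ 72*K^2*(ρ^3*r^3) := by
    nlinarith [mul_le_mul_of_nonneg_left p1 (show (0:ℝ) ≤ 72*K^2*r^3 by positivity)]
  linarith


lemma scalar_est (m γ₁ γ₂ A K r ρ s t u : ℝ)
    (hK : 1 ≤ K) (hm : |m| ≤ K) (hg1 : |γ₁| ≤ K) (hg2 : |γ₂| ≤ K)
    (hA0 : 0 ≤ A) (hAK : A ≤ K)
    (hr : 20*K^2 ≤ r)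
    (hs : |s| ≤ K*r) (ht : |t| ≤ K*r) (hu : |u| ≤ K^2)
    (hρl : r - A ≤ ρ) (hρu : ρ ≤ r + A)
    (hρ2 : ρ^2 = r^2 - 2*s + A^2) :
    |1 + (-2*m*(r^2-s)/r^3 + γ₁*((t-u)/r^3 - 3*t*(r^2-s)/r^5) - 2*γ₂*(r^2-s)/r^4)
        / (2*(1 + 2*m/r + γ₁*t/r^3 + γ₂/r^2))
      - (1 - m/ρ + (2*m^2-γ₂)/ρ^2 + 2*m*s/ρ^3 - γ₁*t/ρ^3)| ≤ 10000*K^4/ρ^3 := by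
  have hK0 : (0:ℝ) < K := by linarith
  have hKK : K ≤ K^2 := by nlinarith
  have hK23 : K^2 ≤ K^3 := by nlinarith
  have hK34 : K^3 ≤ K^4 := by nlinarith
  have hr0 : (0:ℝ) < r := by nlinarith
  have hr1 : (1:ℝ) ≤ r := by nlinarith
  have hKr : K ≤ r/2 := by nlinarith
  have hρh : r/2 ≤ ρ := by linarith
  have hρ0 : (0:ℝ) < ρ := by linarith
  have hρ2r : ρ ≤ 2*r := by linarith
  -- lower bound on F
  set F : ℝ := 1 + 2*m/r + γ₁*t/r^3 + γ₂/r^2 with hFdef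
  clear_value F
  have hFnum : F - 1 = (2*m*r^2 + γ₁*t + γ₂*r)/r^3 := by
    rw [hFdef]
    field_simp
    ring
  have hFnum_abs : |2*m*r^2 + γ₁*t + γ₂*r| ≤ 4*K*r^2 := by
    refine le_trans (abs_add3 _ _ _) ?_
    have b1 : |2*m*r^2| ≤ 2*(K*r^2) := by
      rw [show (2*m*r^2 : ℝ) = 2*(m*r^2) by ring]
      exact abs_mul_le' (by norm_num) (abs_mul_le' hm (le_of_eq (abs_of_pos (by positivity))))
    have b2 : |γ₁*t| ≤ K*(K*r) := abs_mul_le' hg1 ht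
    have b3 : |γ₂*r| ≤ K*r := abs_mul_le' hg2 (le_of_eq (abs_of_pos hr0))
    have f1 : K*(K*r) ≤ K*r^2 := by nlinarith
    have f2 : K*r ≤ K*r^2 := by nlinarith
    linarith
  have hF1 : |F - 1| ≤ 1/5 := by
    rw [hFnum, abs_div, abs_of_pos (show (0:ℝ) < r^3 by positivity)]
    rw [div_le_div_iff₀ (by positivity) (by norm_num : (0:ℝ) < 5)]
    -- |num| * 5 ≤ 1 * r^3
    have e1 : |2*m*r^2 + γ₁*t + γ₂*r| * 5 ≤ 20*K*r^2 := by linarith [mul_le_mul_of_nonneg_right hFnum_abs (by norm_num : (0:ℝ) ≤ 5)]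
    have e2 : 20*K*r^2 ≤ 1*r^3 := by nlinarith
    linarith
  have hF : (1:ℝ)/2 ≤ F := by
    have := abs_le.mp hF1
    linarith [this.1]
  have hFpos : (0:ℝ) < 2*F := by linarith
  have hFne : (2*F) ≠ 0 := ne_of_gt hFpos
  -- part 1
  set D : ℝ := -2*m*(r^2-s)/r^3 + γ₁*((t-u)/r^3 - 3*t*(r^2-s)/r^5) - 2*γ₂*(r^2-s)/r^4 with hDdef
  clear_value D
  set Q : ℝ := -m/r + (2*m^2-γ₂)/r^2 + (m*s-γ₁*t)/r^3 with hQdef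
  clear_value Q
  have hDG : |D - 2*F*Q| ≤ 100*K^4/r^3 := by
    rw [hDdef, hQdef, hFdef]
    exact DG_bound m γ₁ γ₂ K r s t u hK hm hg1 hg2 hr hs ht hu
  have hdiv : D/(2*F) - Q = (D - 2*F*Q)/(2*F) := by
    field_simp
  have hpart1 : |D/(2*F) - Q| ≤ 100*K^4/r^3 := by
    rw [hdiv, abs_div]
    have h2F : |2*F| = 2*F := abs_of_pos (by linarith)
    rw [h2F]
    calc |D - 2*F*Q|/(2*F) ≤ |D - 2*F*Q|/1 := by
          gcongr
          all_goals first | exact abs_nonneg _ | linarith | norm_num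
        _ = |D - 2*F*Q| := by rw [div_one]
        _ ≤ 100*K^4/r^3 := hDG
  -- part 2
  have h_a := sub_a A K r ρ s hK hA0 hAK hr hs hρl hρu hρ2
  have h_b := sub_b A K r ρ s hK hA0 hAK hr hs hρl hρu hρ2
  have h_c := sub_c A K r ρ s s hK hA0 hAK hr hρl hρu hs
  have h_d := sub_c A K r ρ s t hK hA0 hAK hr hρl hρu ht
  set E : ℝ := 1 - m/ρ + (2*m^2-γ₂)/ρ^2 + 2*m*s/ρ^3 - γ₁*t/ρ^3 with hEdef
  clear_value E
  have hEE' : E - (1 + Q)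
      = (-m)*(1/ρ - 1/r - s/r^3) + (2*m^2-γ₂)*(1/ρ^2 - 1/r^2)
        + (2*m)*(s/ρ^3 - s/r^3) + (-γ₁)*(t/ρ^3 - t/r^3) := by
    rw [hEdef, hQdef]
    ring
  have hm2 : |2*m^2 - γ₂| ≤ 3*K^2 := by
    refine le_trans (abs_sub'' _ _) ?_
    have b1 : |2*m^2| ≤ 2*K^2 := by
      rw [show (2*m^2 : ℝ) = 2*(m*m) by ring]
      have := abs_mul_le' (show |(2:ℝ)| ≤ 2 by norm_num) (abs_mul_le' hm hm)
      nlinarith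
    nlinarith
  have hpart2 : |E - (1 + Q)| ≤ 262*K^3/r^3 := by
    rw [hEE']
    refine le_trans (abs_add4 _ _ _ _) ?_
    have b1 : |(-m)*(1/ρ - 1/r - s/r^3)| ≤ K*(10*K^2/r^3) := by
      refine abs_mul_le' ?_ h_a
      rw [abs_neg]; exact hm
    have b2 : |(2*m^2-γ₂)*(1/ρ^2 - 1/r^2)| ≤ 3*K^2*(12*K/r^3) := abs_mul_le' hm2 h_b
    have b3 : |(2*m)*(s/ρ^3 - s/r^3)| ≤ 2*K*(72*K^2/r^3) := by
      refine abs_mul_le' ?_ h_c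
      rw [abs_mul]
      have : |(2:ℝ)| = 2 := by norm_num
      rw [this]
      linarith
    have b4 : |(-γ₁)*(t/ρ^3 - t/r^3)| ≤ K*(72*K^2/r^3) := by
      refine abs_mul_le' ?_ h_d
      rw [abs_neg]; exact hg1
    have hcol : K*(10*K^2/r^3) + 3*K^2*(12*K/r^3) + 2*K*(72*K^2/r^3) + K*(72*K^2/r^3)
        = 262*K^3/r^3 := by
      field_simp
      ring
    linarith
  -- combine
  clear hdiv hDG hFnum hFnum_abs hF1 hF hFpos hFne hEE' hm2 h_a h_b h_c h_d
  clear hs ht hu hm hg1 hg2 hρ2 hρl hρu hKK hK23 hKr hA0 hAK hK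
  clear hDdef hQdef hEdef hFdef
  have htri : |1 + D/(2*F) - E| ≤ |D/(2*F) - Q| + |E - (1 + Q)| := by
    have h1 : 1 + D/(2*F) - E = (D/(2*F) - Q) - (E - (1 + Q)) := by ring
    rw [h1]
    exact abs_sub'' _ _
  have htot : |1 + D/(2*F) - E| ≤ 362*K^4/r^3 := by
    have : 100*K^4/r^3 + 262*K^3/r^3 ≤ 362*K^4/r^3 := by
      rw [← add_div]
      gcongr
      nlinarith
    linarith
  refine le_trans htot ?_
  rw [div_le_div_iff₀ (by positivity) (by positivity)]
  have hρ3 : ρ^3 ≤ 8*r^3 := by nlinarith [pow_le_pow_left₀ (le_of_lt hρ0) hρ2r 3]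
  nlinarith [mul_le_mul_of_nonneg_left hρ3 (show (0:ℝ) ≤ 362*K^4 by positivity),
    mul_pos (pow_pos hr0 3) hK0, pow_pos hK0 4, pow_pos hr0 3]

lemma hasFDerivAt_norm'' (x : E3) (hx : x ≠ 0) :
    HasFDerivAt (fun y : E3 => ‖y‖) (‖x‖⁻¹ • innerSL ℝ x) x := by
  have hn : ‖x‖ ≠ 0 := norm_ne_zero_iff.mpr hx
  have h2 : HasFDerivAt (fun y : E3 => ‖y‖ ^ 2) (2 • innerSL ℝ x) x :=
    (hasStrictFDerivAt_norm_sq x).hasFDerivAt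
  have hsq : (‖x‖ ^ 2 : ℝ) ≠ 0 := pow_ne_zero _ hn
  have hs := (Real.hasDerivAt_sqrt hsq).comp_hasFDerivAt x h2
  have heq : (fun y : E3 => Real.sqrt (‖y‖ ^ 2)) = fun y : E3 => ‖y‖ := by
    funext y; rw [Real.sqrt_sq (norm_nonneg y)]
  simp only [Function.comp_def] at hs
  rw [heq] at hs
  refine hs.congr_fderiv ?_
  rw [Real.sqrt_sq (norm_nonneg x)]
  ext v
  simp [ContinuousLinearMap.smul_apply]
  ring


lemma fderiv_val (m γ₁ γ₂ : ℝ) (c : E3) (x v : E3) (hx : x ≠ 0) :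
    fderiv ℝ (fun y : E3 => 1 + 2*m/‖y‖ + γ₁*⟪c,y⟫/‖y‖^3 + γ₂/‖y‖^2) x v
      = -2*m*⟪x,v⟫/‖x‖^3 + γ₁*(⟪c,v⟫/‖x‖^3 - 3*⟪c,x⟫*⟪x,v⟫/‖x‖^5)
        - 2*γ₂*⟪x,v⟫/‖x‖^4 := by
  have hn : ‖x‖ ≠ 0 := norm_ne_zero_iff.mpr hx
  have hN := hasFDerivAt_norm'' x hx
  have hinv1 : HasFDerivAt (fun y : E3 => (‖y‖)⁻¹)
      ((-(‖x‖^2)⁻¹) • (‖x‖⁻¹ • innerSL ℝ x)) x :=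
    (hasDerivAt_inv hn).comp_hasFDerivAt x hN
  have hinv3 : HasFDerivAt (fun y : E3 => (‖y‖^3)⁻¹)
      ((-((‖x‖^3)^2)⁻¹) • (((3:ℕ) * ‖x‖^(3-1)) • (‖x‖⁻¹ • innerSL ℝ x))) x :=
    (hasDerivAt_inv (pow_ne_zero 3 hn)).comp_hasFDerivAt x
      ((hasDerivAt_pow 3 ‖x‖).comp_hasFDerivAt x hN)
  have hinv2 : HasFDerivAt (fun y : E3 => (‖y‖^2)⁻¹)
      ((-((‖x‖^2)^2)⁻¹) • (((2:ℕ) * ‖x‖^(2-1)) • (‖x‖⁻¹ • innerSL ℝ x))) x :=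
    (hasDerivAt_inv (pow_ne_zero 2 hn)).comp_hasFDerivAt x
      ((hasDerivAt_pow 2 ‖x‖).comp_hasFDerivAt x hN)
  have h1 := hinv1.const_mul (2*m)
  have hnum : HasFDerivAt (fun y : E3 => γ₁ * ⟪c,y⟫) (γ₁ • innerSL ℝ c) x :=
    ((innerSL ℝ c).hasFDerivAt).const_mul γ₁
  have h2 := hnum.mul hinv3
  have h3 := hinv2.const_mul γ₂
  have htot := (((hasFDerivAt_const (1:ℝ) x).add h1).add h2).add h3
  simp only [div_eq_mul_inv]
  rw [HasFDerivAt.fderiv (f := fun y : E3 => 1 + 2*m*‖y‖⁻¹ + γ₁*⟪c,y⟫*(‖y‖^3)⁻¹ + γ₂*(‖y‖^2)⁻¹) htot]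
  simp only [ContinuousLinearMap.add_apply, ContinuousLinearMap.zero_apply,
    ContinuousLinearMap.smul_apply, innerSL_apply_apply, smul_eq_mul, nsmul_eq_mul,
    ContinuousLinearMap.coe_smul', Pi.smul_apply]
  push_cast
  field_simp
  ring

/-- the conformal factor `ξ(x) = 1 + (∇f(x)·(x−a))/(2 f(x))` of the radial field
`X = x − a` with respect to the metric `f δ` satisfies
`ξ(x) = 1 − m/ρ + (2m² − γ₂)/ρ² + 2m(x·a)/ρ³ − γ₁(x·c)/ρ³ + O(ρ^{−3})`, `ρ = |x−a|`. -/
theorem conformal_factor_expansion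
    (m γ₁ γ₂ : ℝ) (a c : E3)
    (f : E3 → ℝ)
    (hf : ∀ x : E3,
      f x = 1 + 2 * m / ‖x‖ + γ₁ * (∑ i, c i * x i) / ‖x‖ ^ 3 + γ₂ / ‖x‖ ^ 2)
    (ξ : E3 → ℝ)
    (hξ : ∀ x : E3, ξ x = 1 + (fderiv ℝ f x) (x - a) / (2 * f x)) :
    ∃ C R : ℝ, ∀ x : E3, R ≤ ‖x‖ →
      |ξ x -
          (1 - m / ‖x - a‖ + (2 * m ^ 2 - γ₂) / ‖x - a‖ ^ 2 +
            2 * m * (∑ i, x i * a i) / ‖x - a‖ ^ 3 -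
            γ₁ * (∑ i, x i * c i) / ‖x - a‖ ^ 3)| ≤
        C / ‖x - a‖ ^ 3 := by
  set K : ℝ := 1 + ‖a‖ + ‖c‖ + |m| + |γ₁| + |γ₂| with hKdef
  have hK : 1 ≤ K := by
    have := norm_nonneg a; have := norm_nonneg c
    have := abs_nonneg m; have := abs_nonneg γ₁; have := abs_nonneg γ₂
    rw [hKdef]; linarith
  have hK0 : (0:ℝ) < K := by linarith
  refine ⟨10000*K^4, 20*K^2, ?_⟩
  intro x hx
  have hr0 : (0:ℝ) < ‖x‖ := by nlinarith
  have hx0 : x ≠ 0 := by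
    intro h
    rw [h, norm_zero] at hr0
    exact lt_irrefl _ hr0
  -- rewrite f
  have hfx : f = fun y : E3 => 1 + 2*m/‖y‖ + γ₁*⟪c,y⟫/‖y‖^3 + γ₂/‖y‖^2 := by
    funext y
    rw [hf y]
    simp [PiLp.inner_apply, RCLike.inner_apply, conj_trivial]
    congr 2
    exact Finset.sum_congr rfl (fun i _ => mul_comm _ _)
  -- inner product identities
  have hxa : ⟪x, x - a⟫ = ‖x‖^2 - ⟪x,a⟫ := by
    rw [inner_sub_right, real_inner_self_eq_norm_sq]
  have hca : ⟪c, x - a⟫ = ⟪c,x⟫ - ⟪c,a⟫ := inner_sub_right c x a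
  have hsum_a : (∑ i, x i * a i) = ⟪x,a⟫ := by
    rw [PiLp.inner_apply]
    simp [RCLike.inner_apply, conj_trivial]
    exact Finset.sum_congr rfl (fun i _ => mul_comm _ _)
  have hsum_c : (∑ i, x i * c i) = ⟪c,x⟫ := by
    rw [PiLp.inner_apply]
    simp [RCLike.inner_apply, conj_trivial, mul_comm]
  -- hypotheses of the scalar lemma
  have hρ2 : ‖x - a‖^2 = ‖x‖^2 - 2*⟪x,a⟫ + ‖a‖^2 := by
    rw [@norm_sub_sq_real]
  have hρbd := abs_norm_sub_norm_le (x - a) x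
  have h1 : ‖x - a - x‖ = ‖a‖ := by
    rw [show x - a - x = -a by abel, norm_neg]
  rw [h1] at hρbd
  have hρbd' := abs_le.mp hρbd
  have hs : |⟪x,a⟫| ≤ K*‖x‖ := by
    refine le_trans (abs_real_inner_le_norm x a) ?_
    have : ‖a‖ ≤ K := by rw [hKdef]; have := norm_nonneg c; have := abs_nonneg m; have := abs_nonneg γ₁; have := abs_nonneg γ₂; linarith
    nlinarith [norm_nonneg a, norm_nonneg x]
  have ht : |⟪c,x⟫| ≤ K*‖x‖ := by
    refine le_trans (abs_real_inner_le_norm c x) ?_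
    have : ‖c‖ ≤ K := by rw [hKdef]; have := norm_nonneg a; have := abs_nonneg m; have := abs_nonneg γ₁; have := abs_nonneg γ₂; linarith
    nlinarith [norm_nonneg c, norm_nonneg x]
  have hu : |⟪c,a⟫| ≤ K^2 := by
    refine le_trans (abs_real_inner_le_norm c a) ?_
    have h2 : ‖c‖ ≤ K := by rw [hKdef]; have := norm_nonneg a; have := abs_nonneg m; have := abs_nonneg γ₁; have := abs_nonneg γ₂; linarith
    have h3 : ‖a‖ ≤ K := by rw [hKdef]; have := norm_nonneg c; have := abs_nonneg m; have := abs_nonneg γ₁; have := abs_nonneg γ₂; linarith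
    nlinarith [norm_nonneg c, norm_nonneg a]
  have hAK : ‖a‖ ≤ K := by
    rw [hKdef]; have := norm_nonneg c; have := abs_nonneg m; have := abs_nonneg γ₁; have := abs_nonneg γ₂; linarith
  have hmK : |m| ≤ K := by
    rw [hKdef]; have := norm_nonneg a; have := norm_nonneg c; have := abs_nonneg γ₁; have := abs_nonneg γ₂; linarith
  have hg1K : |γ₁| ≤ K := by
    rw [hKdef]; have := norm_nonneg a; have := norm_nonneg c; have := abs_nonneg m; have := abs_nonneg γ₂; linarith
  have hg2K : |γ₂| ≤ K := by
    rw [hKdef]; have := norm_nonneg a; have := norm_nonneg c; have := abs_nonneg m; have := abs_nonneg γ₁; linarith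
  -- rewrite the goal
  rw [hξ x, hfx, fderiv_val m γ₁ γ₂ c x (x - a) hx0, hxa, hca, hsum_a, hsum_c]
  have hfval : (1 : ℝ) + 2*m/‖x‖ + γ₁*⟪c,x⟫/‖x‖^3 + γ₂/‖x‖^2
      = 1 + 2*m/‖x‖ + γ₁*⟪c,x⟫/‖x‖^3 + γ₂/‖x‖^2 := rfl
  have := scalar_est m γ₁ γ₂ ‖a‖ K ‖x‖ ‖x - a‖ ⟪x,a⟫ ⟪c,x⟫ ⟪c,a⟫
    hK hmK hg1K hg2K (norm_nonneg a) hAK hx hs ht hu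
    (by linarith [hρbd'.2]) (by linarith [hρbd'.1]) hρ2
  convert this using 3 <;> ring
end
end

section
/- The radial vector field X(x) = x − a is almost conformal for g = fI + p: the matrix field L_X g(x) := (D g(x))[x−a] + 2 g(x) (directional derivative of g along x−a plus 2g) satisfies |L_X g(x) − 2 ξ(x) g(x)| ≤ C' |x|^{−2−ε} for all large |x| and some constant C', where ξ(x) = 1 + (∇f(x)·(x−a))/(2 f(x)). -/
open Real Matrix

noncomputable section

/-- Partial derivative of a real-valued function in the `k`-th coordinate direction. -/
def pd (k : Fin 3) (f : E3 → ℝ) (x : E3) : ℝ :=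
  fderiv ℝ f x (EuclideanSpace.single k 1)

open scoped RealInnerProductSpace

set_option maxHeartbeats 1000000
set_option synthInstance.maxHeartbeats 1000000

theorem hasFDerivAt_norm3 {x : E3} (hx : x ≠ 0) :
    HasFDerivAt (fun y : E3 => ‖y‖) (‖x‖⁻¹ • innerSL ℝ x) x := by
  have hq : HasFDerivAt (fun y : E3 => ⟪y, y⟫) ((2:ℝ) • innerSL ℝ x) x := by
    have h := (hasFDerivAt_id x).inner ℝ (hasFDerivAt_id x)
    refine h.congr_fderiv ?_
    ext v
    simp [two_smul, real_inner_comm]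
  have h0 : ‖x‖ ≠ 0 := norm_ne_zero_iff.mpr hx
  have hxx : ⟪x, x⟫ ≠ 0 := by
    rw [real_inner_self_eq_norm_mul_norm]; positivity
  have hs : HasDerivAt Real.sqrt (1 / (2 * Real.sqrt (⟪x, x⟫))) (⟪x, x⟫) :=
    Real.hasDerivAt_sqrt hxx
  have hcomp := HasDerivAt.comp_hasFDerivAt (f := fun y : E3 => ⟪y, y⟫) x hs hq
  have he : (fun y : E3 => Real.sqrt ⟪y, y⟫) = fun y : E3 => ‖y‖ := by
    funext y
    rw [real_inner_self_eq_norm_mul_norm, Real.sqrt_mul_self (norm_nonneg y)]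
  rw [Function.comp_def, he] at hcomp
  have hC : (1 / (2 * Real.sqrt (⟪x, x⟫))) • ((2:ℝ) • innerSL ℝ x) = ‖x‖⁻¹ • innerSL ℝ x := by
    rw [real_inner_self_eq_norm_mul_norm, Real.sqrt_mul_self (norm_nonneg x), smul_smul]
    congr 1
    field_simp
  rwa [hC] at hcomp

theorem scalar_bound (m γ₁ γ₂ s I J r nv nc : ℝ) (hr : 1 < r) (hI : |I| ≤ r * nv)
    (hJ : |J| ≤ nc * nv) (hs : |s| ≤ nc * r) (hv : 0 ≤ nv) (hc : 0 ≤ nc) :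
    |2*m*(-(r^2)⁻¹*(r⁻¹*I)) + (γ₁*s*(-((r^3)^2)⁻¹*(3*r^2*(r⁻¹*I))) + (r^3)⁻¹*(γ₁*J))
      + γ₂*(-((r^2)^2)⁻¹*(2*r*(r⁻¹*I)))|
      ≤ (2 * |m| + 4 * |γ₁| * nc + 2 * |γ₂|) * nv / r^2 := by
  have hr0 : (0:ℝ) < r := lt_trans one_pos hr
  have hne : r ≠ 0 := ne_of_gt hr0
  have b1 : |2*m*(-(r^2)⁻¹*(r⁻¹*I))| ≤ 2 * |m| * nv/r^2 := by
    have a1 : |2*m*(-(r^2)⁻¹*(r⁻¹*I))| = 2 * |m| * |I|/r^3 := by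
      simp only [abs_mul, abs_neg, abs_inv, abs_pow, abs_of_pos hr0, abs_two]
      field_simp
    rw [a1]
    calc 2 * |m| * |I|/r^3 ≤ 2 * |m| *(r*nv)/r^3 := by gcongr
      _ = 2 * |m| *nv/r^2 := by field_simp
  have b2a : |γ₁*s*(-((r^3)^2)⁻¹*(3*r^2*(r⁻¹*I)))| ≤ 3 * |γ₁| *nc*nv/r^2 := by
    have a2 : |γ₁*s*(-((r^3)^2)⁻¹*(3*r^2*(r⁻¹*I)))| = 3 * |γ₁| * |s| * |I|/r^5 := by
      simp only [abs_mul, abs_neg, abs_inv, abs_pow, abs_of_pos hr0]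
      rw [show |(3:ℝ)| = 3 by norm_num]
      field_simp
    rw [a2]
    calc 3 * |γ₁| * |s| * |I|/r^5 ≤ 3 * |γ₁| *(nc*r)*(r*nv)/r^5 := by gcongr
      _ = 3 * |γ₁| *nc*nv/r^3 := by field_simp
      _ ≤ 3 * |γ₁| *nc*nv/r^2 := by gcongr <;> first | linarith | positivity
  have b2b : |(r^3)⁻¹*(γ₁*J)| ≤ |γ₁| *nc*nv/r^2 := by
    have a3 : |(r^3)⁻¹*(γ₁*J)| = |γ₁| * |J|/r^3 := by
      simp only [abs_mul, abs_inv, abs_pow, abs_of_pos hr0]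
      ring
    rw [a3]
    calc |γ₁| * |J|/r^3 ≤ |γ₁| *(nc*nv)/r^3 := by gcongr
      _ ≤ |γ₁| *(nc*nv)/r^2 := by gcongr <;> first | linarith | positivity
      _ = |γ₁| *nc*nv/r^2 := by ring
  have b3 : |γ₂*(-((r^2)^2)⁻¹*(2*r*(r⁻¹*I)))| ≤ 2 * |γ₂| *nv/r^2 := by
    have a4 : |γ₂*(-((r^2)^2)⁻¹*(2*r*(r⁻¹*I)))| = 2 * |γ₂| * |I|/r^4 := by
      simp only [abs_mul, abs_neg, abs_inv, abs_pow, abs_of_pos hr0, abs_two]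
      field_simp
    rw [a4]
    calc 2 * |γ₂| * |I|/r^4 ≤ 2 * |γ₂| *(r*nv)/r^4 := by gcongr
      _ = 2 * |γ₂| *nv/r^3 := by field_simp
      _ ≤ 2 * |γ₂| *nv/r^2 := by gcongr <;> first | linarith | positivity
  calc |2*m*(-(r^2)⁻¹*(r⁻¹*I)) + (γ₁*s*(-((r^3)^2)⁻¹*(3*r^2*(r⁻¹*I))) + (r^3)⁻¹*(γ₁*J))
      + γ₂*(-((r^2)^2)⁻¹*(2*r*(r⁻¹*I)))|
        ≤ |2*m*(-(r^2)⁻¹*(r⁻¹*I))| + (|γ₁*s*(-((r^3)^2)⁻¹*(3*r^2*(r⁻¹*I)))|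
          + |(r^3)⁻¹*(γ₁*J)|) + |γ₂*(-((r^2)^2)⁻¹*(2*r*(r⁻¹*I)))| := by
        refine le_trans (abs_add_le _ _) ?_
        gcongr
        refine le_trans (abs_add_le _ _) ?_
        gcongr
        exact le_trans (abs_add_le _ _) le_rfl
      _ ≤ 2 * |m| *nv/r^2 + (3 * |γ₁| *nc*nv/r^2 + |γ₁| *nc*nv/r^2) + 2 * |γ₂| *nv/r^2 := by
        gcongr
      _ = (2 * |m| + 4 * |γ₁| * nc + 2 * |γ₂|) * nv / r^2 := by ring

theorem fder (m γ₁ γ₂ : ℝ) (c : E3) (f : E3 → ℝ)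
    (hf : ∀ x : E3,
      f x = 1 + 2 * m / ‖x‖ + γ₁ * (∑ i, c i * x i) / ‖x‖ ^ 3 + γ₂ / ‖x‖ ^ 2)
    (x : E3) (hx1 : 1 < ‖x‖) :
    DifferentiableAt ℝ f x ∧ ∀ v : E3,
      |fderiv ℝ f x v| ≤ (2 * |m| + 4 * |γ₁| * ‖c‖ + 2 * |γ₂|) * ‖v‖ / ‖x‖^2 := by
  have hr0 : (0:ℝ) < ‖x‖ := lt_trans one_pos hx1
  have hx : x ≠ 0 := norm_pos_iff.mp hr0
  have h0 : ‖x‖ ≠ 0 := ne_of_gt hr0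
  have hn := hasFDerivAt_norm3 hx
  have hS : HasFDerivAt (fun y : E3 => ∑ i, c i * y i) (innerSL ℝ c) x := by
    have h := (innerSL ℝ c).hasFDerivAt (x := x)
    have he : ⇑(innerSL ℝ c) = fun y : E3 => ∑ i, c i * y i := by
      funext y; simp [PiLp.inner_apply]; exact Finset.sum_congr rfl fun _ _ => mul_comm _ _
    rwa [he] at h
  have hi1 : HasFDerivAt (fun y : E3 => (‖y‖)⁻¹) ((-(‖x‖^2)⁻¹) • (‖x‖⁻¹ • innerSL ℝ x)) x :=
    HasDerivAt.comp_hasFDerivAt (f := fun y : E3 => ‖y‖) x (hasDerivAt_inv h0) hn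
  have hp3 : HasFDerivAt (fun y : E3 => ‖y‖^3) ((3 * ‖x‖^2) • (‖x‖⁻¹ • innerSL ℝ x)) x := by
    have h := HasDerivAt.comp_hasFDerivAt (f := fun y : E3 => ‖y‖) x (hasDerivAt_pow 3 ‖x‖) hn
    refine h.congr_fderiv ?_
    all_goals norm_num
  have hp2 : HasFDerivAt (fun y : E3 => ‖y‖^2) ((2 * ‖x‖) • (‖x‖⁻¹ • innerSL ℝ x)) x := by
    have h := HasDerivAt.comp_hasFDerivAt (f := fun y : E3 => ‖y‖) x (hasDerivAt_pow 2 ‖x‖) hn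
    refine h.congr_fderiv ?_
    all_goals norm_num
  have hi3 : HasFDerivAt (fun y : E3 => (‖y‖^3)⁻¹)
      ((-((‖x‖^3)^2)⁻¹) • ((3 * ‖x‖^2) • (‖x‖⁻¹ • innerSL ℝ x))) x :=
    HasDerivAt.comp_hasFDerivAt (f := fun y : E3 => ‖y‖^3) x
      (hasDerivAt_inv (pow_ne_zero 3 h0)) hp3
  have hi2 : HasFDerivAt (fun y : E3 => (‖y‖^2)⁻¹)
      ((-((‖x‖^2)^2)⁻¹) • ((2 * ‖x‖) • (‖x‖⁻¹ • innerSL ℝ x))) x :=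
    HasDerivAt.comp_hasFDerivAt (f := fun y : E3 => ‖y‖^2) x
      (hasDerivAt_inv (pow_ne_zero 2 h0)) hp2
  have h1 := hi1.const_mul (2*m)
  have h2 := (hS.const_mul γ₁).mul hi3
  have h3 := hi2.const_mul γ₂
  have hfe : f = fun y : E3 =>
      1 + 2*m*(‖y‖)⁻¹ + (γ₁ * ∑ i, c i * y i) * (‖y‖^3)⁻¹ + γ₂ * (‖y‖^2)⁻¹ := by
    funext y; rw [hf y]; ring
  have hD : HasFDerivAt f
      ((((0 : E3 →L[ℝ] ℝ) + (2*m) • ((-(‖x‖^2)⁻¹) • (‖x‖⁻¹ • innerSL ℝ x))) +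
        ((γ₁ * ∑ i, c i * x i) • ((-((‖x‖^3)^2)⁻¹) • ((3 * ‖x‖^2) • (‖x‖⁻¹ • innerSL ℝ x))) +
          (‖x‖^3)⁻¹ • (γ₁ • innerSL ℝ c))) +
        γ₂ • ((-((‖x‖^2)^2)⁻¹) • ((2 * ‖x‖) • (‖x‖⁻¹ • innerSL ℝ x)))) x := by
    rw [hfe]
    exact (((hasFDerivAt_const (1:ℝ) x).add h1).add h2).add h3
  refine ⟨hD.differentiableAt, fun v => ?_⟩
  rw [hD.fderiv]
  have hs : |∑ i, c i * x i| ≤ ‖c‖ * ‖x‖ := by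
    have he : (∑ i, c i * x i) = ⟪c, x⟫ := by simp [PiLp.inner_apply]; exact Finset.sum_congr rfl fun _ _ => mul_comm _ _
    rw [he]
    exact abs_real_inner_le_norm c x
  simp only [ContinuousLinearMap.add_apply, ContinuousLinearMap.smul_apply,
    ContinuousLinearMap.zero_apply, innerSL_apply_apply, smul_eq_mul, zero_add]
  exact scalar_bound m γ₁ γ₂ (∑ i, c i * x i) ⟪x, v⟫ ⟪c, v⟫ ‖x‖ ‖v‖ ‖c‖ hx1
    (abs_real_inner_le_norm x v) (abs_real_inner_le_norm c v) hs (norm_nonneg v) (norm_nonneg c)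

theorem apply_expand (L : E3 →L[ℝ] ℝ) (v : E3) :
    L v = ∑ k, v k * L (EuclideanSpace.single k 1) := by
  have hv : v = ∑ k, v k • (EuclideanSpace.single k (1:ℝ) : E3) := by
    ext i
    rw [WithLp.ofLp_sum, Finset.sum_apply]
    simp [EuclideanSpace.single_apply]
  conv_lhs => rw [hv]
  rw [map_sum]
  simp

theorem coord_le (v : E3) (k : Fin 3) : |v k| ≤ ‖v‖ := by
  have h := abs_real_inner_le_norm (EuclideanSpace.single k (1:ℝ) : E3) v
  simpa [PiLp.inner_apply, EuclideanSpace.single_apply, EuclideanSpace.norm_single,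
    Finset.sum_ite_eq] using h

/-- the radial field `X(x) = x − a` is almost conformal for `g = f I + p`:
the entries of `L_X g(x) = (Dg(x))[x−a] + 2g(x)` differ from those of `2ξ(x) g(x)` by
`O(|x|^{−2−ε})`, where `ξ(x) = 1 + (∇f(x)·(x−a))/(2 f(x))`. -/
theorem radial_field_almost_conformal
    (m γ₁ γ₂ : ℝ) (a c : E3) (ε : ℝ) (hε : 0 ≤ ε)
    (f : E3 → ℝ)
    (hf : ∀ x : E3,
      f x = 1 + 2 * m / ‖x‖ + γ₁ * (∑ i, c i * x i) / ‖x‖ ^ 3 + γ₂ / ‖x‖ ^ 2)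
    (p : E3 → Matrix (Fin 3) (Fin 3) ℝ)
    (hpsym : ∀ x : E3, 1 < ‖x‖ → (p x).IsSymm)
    (hpC1 : ∀ i j, ContDiffOn ℝ 1 (fun x => p x i j) {x : E3 | 1 < ‖x‖})
    (C : ℝ) (hC : 0 < C)
    (hp0 : ∀ x : E3, 1 < ‖x‖ → ∀ i j, |p x i j| ≤ C * ‖x‖ ^ (-2 - ε))
    (hp1 : ∀ x : E3, 1 < ‖x‖ → ∀ i j k,
      |pd k (fun y => p y i j) x| ≤ C * ‖x‖ ^ (-3 - ε))
    (g : E3 → Matrix (Fin 3) (Fin 3) ℝ)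
    (hg : ∀ x : E3, g x = f x • (1 : Matrix (Fin 3) (Fin 3) ℝ) + p x)
    (ξ : E3 → ℝ)
    (hξ : ∀ x : E3, ξ x = 1 + (fderiv ℝ f x) (x - a) / (2 * f x)) :
    ∃ C' R : ℝ, ∀ x : E3, R ≤ ‖x‖ → ∀ i j : Fin 3,
      |(fderiv ℝ (fun y => g y i j) x) (x - a) + 2 * g x i j - 2 * ξ x * g x i j| ≤
        C' * ‖x‖ ^ (-2 - ε) := by
  set K : ℝ := 2 * |m| + 4 * |γ₁| * ‖c‖ + 2 * |γ₂| with hK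
  set M : ℝ := 2 * |m| + |γ₁| * ‖c‖ + |γ₂| with hM
  have hK0 : 0 ≤ K := by positivity
  have hM0 : 0 ≤ M := by positivity
  refine ⟨6*C + 4*K*C, 4*M + 2*‖a‖ + 4, fun x hR i j => ?_⟩
  have hr2 : (2:ℝ) ≤ ‖x‖ := by
    have : (0:ℝ) ≤ ‖a‖ := norm_nonneg a
    linarith
  have hx1 : 1 < ‖x‖ := by linarith
  have hr0 : (0:ℝ) < ‖x‖ := by linarith
  have hrne : ‖x‖ ≠ 0 := ne_of_gt hr0
  have ha : ‖a‖ ≤ ‖x‖ := by linarith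
  have hva : ‖x - a‖ ≤ 2 * ‖x‖ := by
    calc ‖x - a‖ ≤ ‖x‖ + ‖a‖ := norm_sub_le x a
      _ ≤ 2 * ‖x‖ := by linarith
  have hsx : |∑ i, c i * x i| ≤ ‖c‖ * ‖x‖ := by
    have he : (∑ i, c i * x i) = ⟪c, x⟫ := by simp [PiLp.inner_apply]; exact Finset.sum_congr rfl fun _ _ => mul_comm _ _
    rw [he]
    exact abs_real_inner_le_norm c x
  -- lower bound on f
  have hflow : 1/2 ≤ f x := by
    have hfx : f x = 1 + (2*m/‖x‖ + (γ₁ * ∑ i, c i * x i)/‖x‖^3 + γ₂/‖x‖^2) := by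
      rw [hf x]; ring
    have tA : |2*m/‖x‖| = 2 * |m| /‖x‖ := by
      rw [abs_div, abs_mul, abs_two, abs_of_pos hr0]
    have tB : |(γ₁ * ∑ i, c i * x i)/‖x‖^3| ≤ |γ₁| * ‖c‖ / ‖x‖ := by
      rw [abs_div, abs_mul, abs_pow, abs_of_pos hr0]
      calc |γ₁| * |∑ i, c i * x i| / ‖x‖^3 ≤ |γ₁| * (‖c‖ * ‖x‖) / ‖x‖^3 := by gcongr
        _ = |γ₁| * ‖c‖ / ‖x‖^2 := by field_simp
        _ ≤ |γ₁| * ‖c‖ / ‖x‖ := by gcongr <;> first | linarith | positivity | nlinarith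
    have tC : |γ₂/‖x‖^2| ≤ |γ₂| / ‖x‖ := by
      rw [abs_div, abs_pow, abs_of_pos hr0]
      gcongr <;> first | linarith | positivity | nlinarith
    have htri : |2*m/‖x‖ + (γ₁ * ∑ i, c i * x i)/‖x‖^3 + γ₂/‖x‖^2| ≤ M / ‖x‖ := by
      calc |2*m/‖x‖ + (γ₁ * ∑ i, c i * x i)/‖x‖^3 + γ₂/‖x‖^2|
          ≤ |2*m/‖x‖ + (γ₁ * ∑ i, c i * x i)/‖x‖^3| + |γ₂/‖x‖^2| := abs_add_le _ _
        _ ≤ (|2*m/‖x‖| + |(γ₁ * ∑ i, c i * x i)/‖x‖^3|) + |γ₂/‖x‖^2| := by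
            gcongr; exact abs_add_le _ _
        _ ≤ (2 * |m| /‖x‖ + |γ₁| * ‖c‖ / ‖x‖) + |γ₂| / ‖x‖ := by
            rw [tA]; gcongr
        _ = M / ‖x‖ := by rw [hM]; ring
    have hMr : M / ‖x‖ ≤ 1/2 := by
      rw [div_le_iff₀ hr0]
      nlinarith [norm_nonneg a]
    have := abs_le.mp htri
    rw [hfx]
    linarith [this.1, hMr]
  have hfne : f x ≠ 0 := by linarith
  -- derivative of f
  obtain ⟨hdf, hbd⟩ := fder m γ₁ γ₂ c f hf x hx1
  have hDv : |fderiv ℝ f x (x - a)| ≤ 2 * K := by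
    calc |fderiv ℝ f x (x - a)| ≤ K * ‖x - a‖ / ‖x‖^2 := hbd (x - a)
      _ ≤ K * (2 * ‖x‖) / ‖x‖^2 := by gcongr
      _ = 2 * K / ‖x‖ := by field_simp
      _ ≤ 2 * K := by
          rw [div_le_iff₀ hr0]
          nlinarith
  -- derivative of p entry
  have hop : IsOpen {y : E3 | 1 < ‖y‖} := isOpen_lt continuous_const continuous_norm
  have hpdiff : DifferentiableAt ℝ (fun y => p y i j) x :=
    ((hpC1 i j).contDiffAt (hop.mem_nhds hx1)).differentiableAt one_ne_zero
  have hrpow : ‖x‖ ^ (-3 - ε) * ‖x‖ = ‖x‖ ^ (-2 - ε) := by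
    rw [show (-2 - ε : ℝ) = (-3 - ε) + 1 by ring, Real.rpow_add_one hrne]
  have hFpv : |fderiv ℝ (fun y => p y i j) x (x - a)| ≤ 6 * C * ‖x‖ ^ (-2 - ε) := by
    rw [apply_expand]
    calc |∑ k, (x - a) k * fderiv ℝ (fun y => p y i j) x (EuclideanSpace.single k 1)|
        ≤ ∑ k, |(x - a) k * fderiv ℝ (fun y => p y i j) x (EuclideanSpace.single k 1)| :=
          Finset.abs_sum_le_sum_abs _ _
      _ ≤ ∑ _k : Fin 3, (2 * ‖x‖) * (C * ‖x‖ ^ (-3 - ε)) := by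
          refine Finset.sum_le_sum fun k _ => ?_
          rw [abs_mul]
          have h1 : |(x - a) k| ≤ 2 * ‖x‖ := le_trans (coord_le (x - a) k) hva
          have h2 : |fderiv ℝ (fun y => p y i j) x (EuclideanSpace.single k 1)|
              ≤ C * ‖x‖ ^ (-3 - ε) := hp1 x hx1 i j k
          exact mul_le_mul h1 h2 (abs_nonneg _) (by positivity)
      _ = 3 * ((2 * ‖x‖) * (C * ‖x‖ ^ (-3 - ε))) := by
          rw [Finset.sum_const]
          simp
      _ = 6 * C * (‖x‖ ^ (-3 - ε) * ‖x‖) := by ring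
      _ = 6 * C * ‖x‖ ^ (-2 - ε) := by rw [hrpow]
  -- derivative of g entry
  have hgf : (fun y => g y i j)
      = fun y => f y * (1 : Matrix (Fin 3) (Fin 3) ℝ) i j + p y i j := by
    funext y
    rw [hg y]
    simp [Matrix.add_apply, Matrix.smul_apply, smul_eq_mul]
  have hddg : HasFDerivAt (fun y => f y * (1 : Matrix (Fin 3) (Fin 3) ℝ) i j + p y i j)
      (((1 : Matrix (Fin 3) (Fin 3) ℝ) i j) • fderiv ℝ f x + fderiv ℝ (fun y => p y i j) x) x :=
    (hdf.hasFDerivAt.mul_const _).add hpdiff.hasFDerivAt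
  have hdg : fderiv ℝ (fun y => g y i j) x (x - a)
      = fderiv ℝ f x (x - a) * (1 : Matrix (Fin 3) (Fin 3) ℝ) i j
        + fderiv ℝ (fun y => p y i j) x (x - a) := by
    rw [hgf, hddg.fderiv]
    simp only [ContinuousLinearMap.add_apply, ContinuousLinearMap.smul_apply, smul_eq_mul]
    ring
  have hgx : g x i j = f x * (1 : Matrix (Fin 3) (Fin 3) ℝ) i j + p x i j := by
    rw [hg x]
    simp [Matrix.add_apply, Matrix.smul_apply, smul_eq_mul]
  have key : (fderiv ℝ (fun y => g y i j) x) (x - a) + 2 * g x i j - 2 * ξ x * g x i j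
      = fderiv ℝ (fun y => p y i j) x (x - a)
        - (fderiv ℝ f x (x - a) / f x) * p x i j := by
    rw [hdg, hgx, hξ x]
    field_simp
    ring
  rw [key]
  have habs : |fderiv ℝ f x (x - a) / f x| ≤ 4 * K := by
    rw [abs_div, abs_of_pos (by linarith : (0:ℝ) < f x)]
    rw [div_le_iff₀ (by linarith : (0:ℝ) < f x)]
    nlinarith
  calc |fderiv ℝ (fun y => p y i j) x (x - a) - (fderiv ℝ f x (x - a) / f x) * p x i j|
      ≤ |fderiv ℝ (fun y => p y i j) x (x - a)| + |(fderiv ℝ f x (x - a) / f x) * p x i j| :=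
        abs_sub _ _
    _ ≤ 6 * C * ‖x‖ ^ (-2 - ε) + (4 * K) * (C * ‖x‖ ^ (-2 - ε)) := by
        refine add_le_add hFpv ?_
        rw [abs_mul]
        exact mul_le_mul habs (hp0 x hx1 i j) (abs_nonneg _) (by positivity)
    _ = (6*C + 4*K*C) * ‖x‖ ^ (-2 - ε) := by ring
end
end

section
/- The outward g-unit normal to the Euclidean sphere {y : |y−a| = ρ} at x, namely ν(x) = g(x)⁻¹𝔯 / √(𝔯ᵀ g(x)⁻¹ 𝔯) with 𝔯 = (x−a)/|x−a|, satisfies ν(x) = f(x)^{−1/2} 𝔯 + O(ρ^{−2−ε}), and the g-inner product of X(x) = x − a with ν satisfies (x−a)ᵀ g(x) ν(x) = f(x)^{1/2} ρ + O(ρ^{−1−ε}), where ρ = |x−a| and the O-bounds hold for all large |x|. -/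
open Real Matrix

noncomputable section

set_option maxHeartbeats 1000000

lemma coord_le_s16 (x : E3) (i : Fin 3) : |x i| ≤ ‖x‖ := by
  have h : ‖x‖ = Real.sqrt (∑ i, (x i)^2) := by
    simp [EuclideanSpace.norm_eq, Real.norm_eq_abs, sq_abs]
  have h2 : (x i)^2 ≤ ∑ j, (x j)^2 :=
    Finset.single_le_sum (fun j _ => sq_nonneg (x j)) (Finset.mem_univ i)
  calc |x i| = Real.sqrt ((x i)^2) := (Real.sqrt_sq_eq_abs _).symm
    _ ≤ Real.sqrt (∑ j, (x j)^2) := Real.sqrt_le_sqrt h2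
    _ = ‖x‖ := h.symm

lemma norm_sq_sum (x : E3) : ∑ i, (x i)^2 = ‖x‖^2 := by
  have h : ‖x‖ = Real.sqrt (∑ i, (x i)^2) := by
    simp [EuclideanSpace.norm_eq, Real.norm_eq_abs, sq_abs]
  rw [h, Real.sq_sqrt (Finset.sum_nonneg fun i _ => sq_nonneg (x i))]

lemma inj3 (f η : ℝ) (hf1 : 3/4 ≤ f) (hη0 : 0 ≤ η) (hη : η ≤ 1/16)
    (p : Matrix (Fin 3) (Fin 3) ℝ) (hp : ∀ i j, |p i j| ≤ η)
    (d : Fin 3 → ℝ) (hd : (f • (1:Matrix (Fin 3) (Fin 3) ℝ) + p) *ᵥ d = 0) : d = 0 := by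
  have key : ∀ i, f * d i + ∑ j, p i j * d j = 0 := by
    intro i
    have := congrFun hd i
    rw [Matrix.add_mulVec, Matrix.smul_mulVec, Matrix.one_mulVec] at this
    simpa [Matrix.mulVec, dotProduct] using this
  set M := |d 0| ⊔ (|d 1| ⊔ |d 2|) with hM
  have hdM : ∀ i, |d i| ≤ M := by
    intro i
    fin_cases i
    · exact le_sup_left
    · exact le_sup_of_le_right le_sup_left
    · exact le_sup_of_le_right le_sup_right
  have hM0 : 0 ≤ M := (abs_nonneg _).trans (hdM 0)
  have hb : ∀ i, |d i| ≤ 4 * η * M := by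
    intro i
    have h1 := key i
    have h2 : |∑ j, p i j * d j| ≤ 3 * η * M := by
      calc |∑ j, p i j * d j| ≤ ∑ j, |p i j * d j| := Finset.abs_sum_le_sum_abs _ _
        _ ≤ ∑ _j : Fin 3, η * M := by
            apply Finset.sum_le_sum
            intro j _
            rw [abs_mul]
            exact mul_le_mul (hp i j) (hdM j) (abs_nonneg _) hη0
        _ = 3 * η * M := by simp; ring
    have h3 : |f * d i| ≤ 3 * η * M := by
      have : f * d i = -(∑ j, p i j * d j) := by linarith
      rw [this, abs_neg]; exact h2
    rw [abs_mul, abs_of_pos (by linarith : (0:ℝ) < f)] at h3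
    nlinarith [abs_nonneg (d i)]
  have hMle : M ≤ 4 * η * M := by
    simp only [hM]; exact sup_le (hb 0) (sup_le (hb 1) (hb 2))
  have : M ≤ 0 := by nlinarith
  have hM0' : M = 0 := le_antisymm this hM0
  funext i
  have := (hdM i).trans_eq hM0'
  simpa using le_antisymm this (abs_nonneg _)

lemma unit3 (f η : ℝ) (hf1 : 3/4 ≤ f) (hη0 : 0 ≤ η) (hη : η ≤ 1/16)
    (p : Matrix (Fin 3) (Fin 3) ℝ) (hp : ∀ i j, |p i j| ≤ η) :
    IsUnit (f • (1:Matrix (Fin 3) (Fin 3) ℝ) + p) := by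
  apply Matrix.mulVec_injective_iff_isUnit.mp
  intro v w h
  have h0 : (f • (1:Matrix (Fin 3) (Fin 3) ℝ) + p) *ᵥ (v - w) = 0 := by
    rw [Matrix.mulVec_sub, h, sub_self]
  exact sub_eq_zero.mp (inj3 f η hf1 hη0 hη p hp _ h0)

lemma sol3 (f η : ℝ) (hf1 : 3/4 ≤ f) (hf2 : f ≤ 5/4) (hη0 : 0 ≤ η) (hη : η ≤ 1/16)
    (p : Matrix (Fin 3) (Fin 3) ℝ) (hp : ∀ i j, |p i j| ≤ η)
    (r u : Fin 3 → ℝ) (hr : ∀ i, |r i| ≤ 1)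
    (hu : (f • (1:Matrix (Fin 3) (Fin 3) ℝ) + p) *ᵥ u = r) :
    (∀ i, |u i| ≤ 2) ∧ ∀ i, |u i - r i / f| ≤ 8 * η := by
  have key : ∀ i, f * u i + ∑ j, p i j * u j = r i := by
    intro i
    have := congrFun hu i
    rw [Matrix.add_mulVec, Matrix.smul_mulVec, Matrix.one_mulVec] at this
    simpa [Matrix.mulVec, dotProduct] using this
  set M := |u 0| ⊔ (|u 1| ⊔ |u 2|) with hM
  have hdM : ∀ i, |u i| ≤ M := by
    intro i
    fin_cases i
    · exact le_sup_left
    · exact le_sup_of_le_right le_sup_left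
    · exact le_sup_of_le_right le_sup_right
  have hM0 : 0 ≤ M := (abs_nonneg _).trans (hdM 0)
  have hsum : ∀ i, |∑ j, p i j * u j| ≤ 3 * η * M := by
    intro i
    calc |∑ j, p i j * u j| ≤ ∑ j, |p i j * u j| := Finset.abs_sum_le_sum_abs _ _
      _ ≤ ∑ _j : Fin 3, η * M := by
          apply Finset.sum_le_sum
          intro j _
          rw [abs_mul]
          exact mul_le_mul (hp i j) (hdM j) (abs_nonneg _) hη0
      _ = 3 * η * M := by simp; ring
  have hb : ∀ i, |u i| ≤ (4/3) * (1 + 3 * η * M) := by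
    intro i
    have h1 := key i
    have h3 : |f * u i| ≤ 1 + 3 * η * M := by
      have : f * u i = r i - (∑ j, p i j * u j) := by linarith
      rw [this]
      calc |r i - ∑ j, p i j * u j| ≤ |r i| + |∑ j, p i j * u j| := abs_sub _ _
        _ ≤ 1 + 3 * η * M := add_le_add (hr i) (hsum i)
    rw [abs_mul, abs_of_pos (by linarith : (0:ℝ) < f)] at h3
    nlinarith [abs_nonneg (u i)]
  have hMle : M ≤ (4/3) * (1 + 3 * η * M) := by
    simp only [hM]; exact sup_le (hb 0) (sup_le (hb 1) (hb 2))
  have hM2 : M ≤ 2 := by nlinarith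
  constructor
  · exact fun i => (hdM i).trans hM2
  intro i
  have h1 := key i
  have hfi : (0:ℝ) < f := by linarith
  have e : u i - r i / f = -(∑ j, p i j * u j) / f := by
    field_simp
    linarith [h1]
  rw [e, abs_div, abs_neg, abs_of_pos hfi]
  have h2 : |∑ j, p i j * u j| ≤ 6 * η := by
    calc |∑ j, p i j * u j| ≤ 3 * η * M := hsum i
      _ ≤ 6 * η := by nlinarith
  calc |∑ j, p i j * u j| / f ≤ (6 * η) / f := by gcongr
    _ ≤ 8 * η := by rw [div_le_iff₀ hfi]; nlinarith

/-- the outward `g`-unit normal `ν = g⁻¹𝔯/√(𝔯ᵀ g⁻¹ 𝔯)` of the Euclidean sphere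
`{|y − a| = ρ}` satisfies `ν = f^{−1/2}𝔯 + O(ρ^{−2−ε})` and
`(x−a)ᵀ g ν = f^{1/2} ρ + O(ρ^{−1−ε})`, where `𝔯 = (x−a)/|x−a|` and `ρ = |x−a|`. -/
theorem unit_normal_expansion
    (m γ₁ γ₂ : ℝ) (a c : E3) (ε : ℝ) (hε : 0 ≤ ε)
    (f : E3 → ℝ)
    (hf : ∀ x : E3,
      f x = 1 + 2 * m / ‖x‖ + γ₁ * (∑ i, c i * x i) / ‖x‖ ^ 3 + γ₂ / ‖x‖ ^ 2)
    (p : E3 → Matrix (Fin 3) (Fin 3) ℝ)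
    (hpsym : ∀ x : E3, 1 < ‖x‖ → (p x).IsSymm)
    (hpC1 : ∀ i j, ContDiffOn ℝ 1 (fun x => p x i j) {x : E3 | 1 < ‖x‖})
    (C : ℝ) (hC : 0 < C)
    (hp0 : ∀ x : E3, 1 < ‖x‖ → ∀ i j, |p x i j| ≤ C * ‖x‖ ^ (-2 - ε))
    (g : E3 → Matrix (Fin 3) (Fin 3) ℝ)
    (hg : ∀ x : E3, g x = f x • (1 : Matrix (Fin 3) (Fin 3) ℝ) + p x)
    (𝔯 : E3 → Fin 3 → ℝ)
    (h𝔯 : ∀ x : E3, 𝔯 x = fun i => (x i - a i) / ‖x - a‖)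
    (ν : E3 → Fin 3 → ℝ)
    (hν : ∀ x : E3, ν x = fun i =>
      ((g x)⁻¹ *ᵥ 𝔯 x) i / Real.sqrt (∑ j, 𝔯 x j * ((g x)⁻¹ *ᵥ 𝔯 x) j)) :
    ∃ C' R : ℝ, ∀ x : E3, R ≤ ‖x‖ →
      (∀ i : Fin 3,
          |ν x i - 𝔯 x i / Real.sqrt (f x)| ≤ C' * ‖x - a‖ ^ (-2 - ε)) ∧
        |(∑ i, (x i - a i) * ((g x) *ᵥ ν x) i) - Real.sqrt (f x) * ‖x - a‖| ≤
          C' * ‖x - a‖ ^ (-1 - ε) := by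
  set B : ℝ := 2*|m| + |γ₁| * (∑ i, |c i|) + |γ₂| with hBdef
  have hB0 : 0 ≤ B := by positivity
  refine ⟨1000 * (C + 1) * (2:ℝ) ^ ((2:ℝ) + ε),
    2*‖a‖ + 8*B + 100*(C+1) + 100, fun x hx => ?_⟩
  have hx1 : (1:ℝ) < ‖x‖ := by
    have := norm_nonneg a
    nlinarith
  have hx0 : (0:ℝ) < ‖x‖ := by linarith
  -- f bounds
  have hcx : |∑ i, c i * x i| ≤ (∑ i, |c i|) * ‖x‖ := by
    calc |∑ i, c i * x i| ≤ ∑ i, |c i * x i| := Finset.abs_sum_le_sum_abs _ _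
      _ ≤ ∑ i, |c i| * ‖x‖ := Finset.sum_le_sum fun i _ => by
          rw [abs_mul]
          exact mul_le_mul_of_nonneg_left (coord_le_s16 x i) (abs_nonneg _)
      _ = (∑ i, |c i|) * ‖x‖ := by rw [Finset.sum_mul]
  have hfb : |f x - 1| ≤ B / ‖x‖ := by
    rw [hf x]
    have h1 : |2 * m / ‖x‖| ≤ 2*|m| / ‖x‖ := by
      rw [abs_div, abs_of_pos hx0, abs_mul]
      gcongr
      simp
    have h2 : |γ₁ * (∑ i, c i * x i) / ‖x‖ ^ 3| ≤ (|γ₁| * (∑ i, |c i|)) / ‖x‖ := by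
      rw [abs_div, abs_mul, abs_of_pos (by positivity : (0:ℝ) < ‖x‖^3)]
      rw [div_le_div_iff₀ (by positivity) hx0]
      have hs0 : 0 ≤ ∑ i, |c i| := by positivity
      nlinarith [abs_nonneg γ₁, abs_nonneg (∑ i, c i * x i),
        mul_le_mul_of_nonneg_right (mul_le_mul_of_nonneg_left hcx (abs_nonneg γ₁)) hx0.le,
        mul_nonneg (mul_nonneg (mul_nonneg (abs_nonneg γ₁) hs0) (sq_nonneg ‖x‖))
          (by linarith : (0:ℝ) ≤ ‖x‖ - 1)]
    have h3 : |γ₂ / ‖x‖ ^ 2| ≤ |γ₂| / ‖x‖ := by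
      rw [abs_div, abs_of_pos (by positivity : (0:ℝ) < ‖x‖^2)]
      rw [div_le_div_iff₀ (by positivity) hx0]
      nlinarith [abs_nonneg γ₂,
        mul_nonneg (abs_nonneg γ₂) (mul_nonneg hx0.le (by linarith : (0:ℝ) ≤ ‖x‖ - 1))]
    have e : 1 + 2 * m / ‖x‖ + γ₁ * (∑ i, c i * x i) / ‖x‖ ^ 3 + γ₂ / ‖x‖ ^ 2 - 1
        = 2 * m / ‖x‖ + γ₁ * (∑ i, c i * x i) / ‖x‖ ^ 3 + γ₂ / ‖x‖ ^ 2 := by ring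
    rw [e]
    have hB' : B / ‖x‖ = 2*|m| / ‖x‖ + (|γ₁| * (∑ i, |c i|)) / ‖x‖ + |γ₂| / ‖x‖ := by
      rw [hBdef]; ring
    rw [hB']
    calc |2 * m / ‖x‖ + γ₁ * (∑ i, c i * x i) / ‖x‖ ^ 3 + γ₂ / ‖x‖ ^ 2|
        ≤ |2 * m / ‖x‖ + γ₁ * (∑ i, c i * x i) / ‖x‖ ^ 3| + |γ₂ / ‖x‖ ^ 2| := abs_add_le _ _
      _ ≤ |2 * m / ‖x‖| + |γ₁ * (∑ i, c i * x i) / ‖x‖ ^ 3| + |γ₂ / ‖x‖ ^ 2| := by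
          linarith [abs_add_le (2 * m / ‖x‖) (γ₁ * (∑ i, c i * x i) / ‖x‖ ^ 3)]
      _ ≤ 2*|m| / ‖x‖ + (|γ₁| * (∑ i, |c i|)) / ‖x‖ + |γ₂| / ‖x‖ := by linarith
  have hfsmall : |f x - 1| ≤ 1/8 := by
    refine hfb.trans ?_
    rw [div_le_iff₀ hx0]
    have := norm_nonneg a
    nlinarith
  have hf34 : 3/4 ≤ f x := by
    have := abs_le.mp hfsmall; linarith [this.1]
  have hf54 : f x ≤ 5/4 := by
    have := abs_le.mp hfsmall; linarith [this.2]
  -- η bounds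
  obtain ⟨η, hηdef⟩ : ∃ η : ℝ, η = C * ‖x‖ ^ ((-2:ℝ) - ε) := ⟨_, rfl⟩
  have hη0 : 0 < η := by rw [hηdef]; positivity
  have hηsmall : η ≤ 1/10000 := by
    have e1 : ‖x‖ ^ ((-2:ℝ) - ε) ≤ ‖x‖ ^ (-2:ℝ) :=
      Real.rpow_le_rpow_of_exponent_le hx1.le (by linarith)
    have e2 : ‖x‖ ^ (-2:ℝ) = (‖x‖^2)⁻¹ := by
      rw [Real.rpow_neg hx0.le, Real.rpow_two]
    have hN : 100*(C+1) ≤ ‖x‖ := by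
      have := norm_nonneg a; nlinarith
    have hN2 : 10000 * C ≤ ‖x‖^2 := by nlinarith
    calc η ≤ C * (‖x‖^2)⁻¹ := by
          rw [hηdef, ← e2]; exact mul_le_mul_of_nonneg_left e1 hC.le
      _ = C / ‖x‖^2 := by ring
      _ ≤ 1/10000 := by
          rw [div_le_div_iff₀ (by positivity) (by norm_num)]
          nlinarith
  -- ρ facts
  obtain ⟨ρ, hρdef⟩ : ∃ ρ : ℝ, ρ = ‖x - a‖ := ⟨_, rfl⟩
  simp only [← hρdef]
  have hρl : ‖x‖ - ‖a‖ ≤ ρ := by rw [hρdef]; exact norm_sub_norm_le x a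
  have hρu : ρ ≤ ‖x‖ + ‖a‖ := by rw [hρdef]; exact norm_sub_le x a
  have ha_le : ‖a‖ ≤ ‖x‖ := by have := norm_nonneg a; nlinarith
  have hρu2 : ρ ≤ 2 * ‖x‖ := by linarith
  have hρ0 : 0 < ρ := by have := norm_nonneg a; nlinarith
  -- 𝔯 facts
  have hr_def : ∀ i, 𝔯 x i = (x i - a i) / ρ := fun i => by rw [h𝔯 x, hρdef]
  have hsq : ∑ i, (x i - a i)^2 = ρ^2 := by
    rw [hρdef]
    calc ∑ i, (x i - a i)^2 = ∑ i, ((x - a) i)^2 := rfl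
      _ = ‖x - a‖^2 := norm_sq_sum (x - a)
  have hxa_le : ∀ i, |x i - a i| ≤ ρ := fun i => hρdef ▸ coord_le_s16 (x - a) i
  have hrb : ∀ i, |𝔯 x i| ≤ 1 := by
    intro i
    rw [hr_def i, abs_div, abs_of_pos hρ0, div_le_one hρ0]
    exact hxa_le i
  have hr2 : ∑ i, (𝔯 x i)^2 = 1 := by
    have e : ∀ i, (𝔯 x i)^2 = (x i - a i)^2 / ρ^2 := fun i => by
      rw [hr_def i, div_pow]
    rw [Finset.sum_congr rfl fun i _ => e i, ← Finset.sum_div, hsq]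
    field_simp
  have hsum_xr : ∑ i, (x i - a i) * 𝔯 x i = ρ := by
    have e : ∀ i, (x i - a i) * 𝔯 x i = (x i - a i)^2 / ρ := fun i => by
      rw [hr_def i]; ring
    rw [Finset.sum_congr rfl fun i _ => e i, ← Finset.sum_div, hsq]
    field_simp
  -- matrix facts
  have hgx : g x = f x • (1 : Matrix (Fin 3) (Fin 3) ℝ) + p x := hg x
  have hp' : ∀ i j, |p x i j| ≤ η := by rw [hηdef]; exact hp0 x hx1
  have hunit : IsUnit (g x) := by
    rw [hgx]; exact unit3 (f x) η hf34 hη0.le (by linarith) _ hp'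
  have hdet : IsUnit (g x).det := (Matrix.isUnit_iff_isUnit_det _).mp hunit
  obtain ⟨u, hu_def⟩ : ∃ u : Fin 3 → ℝ, u = (g x)⁻¹ *ᵥ 𝔯 x := ⟨_, rfl⟩
  have hgu : g x *ᵥ u = 𝔯 x := by
    rw [hu_def, Matrix.mulVec_mulVec, Matrix.mul_nonsing_inv _ hdet, Matrix.one_mulVec]
  have hsol := sol3 (f x) η hf34 hf54 hη0.le (by linarith) (p x) hp' (𝔯 x) u hrb
    (by rw [← hgx]; exact hgu)
  have hub : ∀ i, |u i| ≤ 2 := hsol.1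
  have hw : ∀ i, |u i - 𝔯 x i / f x| ≤ 8 * η := hsol.2
  obtain ⟨s, hs_def⟩ : ∃ s : ℝ, s = ∑ j, 𝔯 x j * u j := ⟨_, rfl⟩
  have hνx : ν x = fun i => u i / Real.sqrt s := by
    rw [hν x]
    simp only [← hu_def, ← hs_def]
  have hf0 : f x ≠ 0 := by linarith
  -- |s - 1/f| ≤ 24 η
  have hj : ∀ j, |𝔯 x j * u j - (𝔯 x j)^2 / f x| ≤ 8 * η := by
    intro j
    have e : 𝔯 x j * u j - (𝔯 x j)^2 / f x = 𝔯 x j * (u j - 𝔯 x j / f x) := by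
      field_simp
    rw [e, abs_mul]
    calc |𝔯 x j| * |u j - 𝔯 x j / f x| ≤ 1 * (8 * η) :=
        mul_le_mul (hrb j) (hw j) (abs_nonneg _) (by norm_num)
      _ = 8 * η := by ring
  have hr2' : (𝔯 x 0)^2 + (𝔯 x 1)^2 + (𝔯 x 2)^2 = 1 := by
    simpa [Fin.sum_univ_three] using hr2
  have hse : s - 1 / f x =
      (𝔯 x 0 * u 0 - (𝔯 x 0)^2 / f x) + (𝔯 x 1 * u 1 - (𝔯 x 1)^2 / f x)
      + (𝔯 x 2 * u 2 - (𝔯 x 2)^2 / f x) := by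
    have h1 : (𝔯 x 0)^2 / f x + (𝔯 x 1)^2 / f x + (𝔯 x 2)^2 / f x = 1 / f x := by
      rw [← add_div, ← add_div, hr2']
    have h2 : s = 𝔯 x 0 * u 0 + 𝔯 x 1 * u 1 + 𝔯 x 2 * u 2 := by
      rw [hs_def, Fin.sum_univ_three]
    linarith
  have habs_s : |s - 1 / f x| ≤ 24 * η := by
    rw [hse]
    have t1 := abs_add_le
      ((𝔯 x 0 * u 0 - (𝔯 x 0)^2 / f x) + (𝔯 x 1 * u 1 - (𝔯 x 1)^2 / f x))
      (𝔯 x 2 * u 2 - (𝔯 x 2)^2 / f x)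
    have t2 := abs_add_le (𝔯 x 0 * u 0 - (𝔯 x 0)^2 / f x) (𝔯 x 1 * u 1 - (𝔯 x 1)^2 / f x)
    linarith [hj 0, hj 1, hj 2]
  have hfinv1 : 4/5 ≤ 1 / f x := by rw [le_div_iff₀ (by linarith)]; linarith
  have hfinv2 : 1 / f x ≤ 4/3 := by rw [div_le_iff₀ (by linarith)]; linarith
  have hs_lb : 1/2 ≤ s := by
    have := (abs_le.mp habs_s).1; linarith
  have hs_ub : s ≤ 2 := by
    have := (abs_le.mp habs_s).2; linarith
  have hs_pos : 0 < s := by linarith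
  clear hν hf hg h𝔯 hpsym hpC1 hp0 hgx hp' hunit hdet hsol hub hu_def hs_def
  clear hr_def hxa_le hsq hr2 hr2' hse hρl hρu ha_le hfb hfsmall hcx hx hB0 hBdef
  clear B m γ₁ γ₂ c
  -- P, Q
  obtain ⟨P, hPdef⟩ : ∃ P : ℝ, P = Real.sqrt (f x) := ⟨_, rfl⟩
  obtain ⟨Q, hQdef⟩ : ∃ Q : ℝ, Q = Real.sqrt s := ⟨_, rfl⟩
  simp only [← hQdef] at hνx
  have hP2 : P^2 = f x := by rw [hPdef]; exact Real.sq_sqrt (by linarith)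
  have hQ2 : Q^2 = s := by rw [hQdef]; exact Real.sq_sqrt hs_pos.le
  have hPnn : 0 ≤ P := hPdef ▸ Real.sqrt_nonneg _
  have hQnn : 0 ≤ Q := hQdef ▸ Real.sqrt_nonneg _
  have hP1 : 4/5 ≤ P := by nlinarith
  have hPu : P ≤ 6/5 := by nlinarith
  have hQ1 : 7/10 ≤ Q := by nlinarith
  have hQu : Q ≤ 3/2 := by nlinarith
  have hP0 : 0 < P := by linarith
  have hQ0 : 0 < Q := by linarith
  have hPQ : |P * Q - 1| ≤ 40 * η := by
    have h1 : (P*Q)^2 = f x * s := by rw [mul_pow, hP2, hQ2]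
    have h2 : |f x * s - 1| ≤ 30 * η := by
      have e : f x * (s - 1 / f x) = f x * s - 1 := by
        rw [mul_sub, mul_one_div, div_self hf0]
      rw [← e, abs_mul, abs_of_pos (by linarith : (0:ℝ) < f x)]
      nlinarith [abs_nonneg (s - 1 / f x), habs_s, hf54, hη0.le]
    have h2' := abs_le.mp h2
    have hid : (P*Q - 1)*(P*Q + 1) = f x * s - 1 := by
      rw [← h1]; ring
    rw [abs_le]
    constructor
    · rcases le_or_gt 1 (P*Q) with hcase | hcase
      · linarith
      · have hneg : P*Q - 1 ≤ 0 := by linarith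
        have hprod : (P*Q - 1)*(P*Q + 1) ≤ P*Q - 1 := by
          nlinarith [mul_nonneg (neg_nonneg.mpr hneg) (mul_nonneg hPnn hQnn)]
        linarith [h2'.1]
    · rcases le_or_gt (P*Q) 1 with hcase | hcase
      · linarith
      · have hpos : 0 ≤ P*Q - 1 := by linarith
        have hprod : P*Q - 1 ≤ (P*Q - 1)*(P*Q + 1) := by
          nlinarith [mul_nonneg hpos (mul_nonneg hPnn hQnn)]
        linarith [h2'.2]
  -- rpow facts
  have hxrpow : ‖x‖ ^ ((-2:ℝ) - ε) = (‖x‖ ^ ((2:ℝ) + ε))⁻¹ := by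
    rw [show ((-2:ℝ) - ε) = -((2:ℝ) + ε) by ring, Real.rpow_neg hx0.le]
  have hρrpow : ρ ^ ((-2:ℝ) - ε) = (ρ ^ ((2:ℝ) + ε))⁻¹ := by
    rw [show ((-2:ℝ) - ε) = -((2:ℝ) + ε) by ring, Real.rpow_neg hρ0.le]
  have hkey : ‖x‖ ^ ((-2:ℝ) - ε) ≤ 2 ^ ((2:ℝ) + ε) * ρ ^ ((-2:ℝ) - ε) := by
    have h1 : ρ ^ ((2:ℝ) + ε) ≤ 2 ^ ((2:ℝ) + ε) * ‖x‖ ^ ((2:ℝ) + ε) := by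
      rw [← Real.mul_rpow (by norm_num) hx0.le]
      exact Real.rpow_le_rpow hρ0.le hρu2 (by linarith)
    have h2 : (2 ^ ((2:ℝ) + ε) * ‖x‖ ^ ((2:ℝ) + ε))⁻¹ ≤ (ρ ^ ((2:ℝ) + ε))⁻¹ :=
      inv_anti₀ (by positivity) h1
    rw [mul_inv] at h2
    rw [hxrpow, hρrpow]
    have h2pow : (0:ℝ) < (2:ℝ) ^ ((2:ℝ) + ε) := by positivity
    calc (‖x‖ ^ ((2:ℝ) + ε))⁻¹
        = 2 ^ ((2:ℝ) + ε) * ((2 ^ ((2:ℝ) + ε))⁻¹ * (‖x‖ ^ ((2:ℝ) + ε))⁻¹) := by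
          field_simp
      _ ≤ 2 ^ ((2:ℝ) + ε) * (ρ ^ ((2:ℝ) + ε))⁻¹ :=
          mul_le_mul_of_nonneg_left h2 h2pow.le
  have hρmul : ρ * ρ ^ ((-2:ℝ) - ε) = ρ ^ ((-1:ℝ) - ε) := by
    nth_rewrite 1 [← Real.rpow_one ρ]
    rw [← Real.rpow_add hρ0]; ring_nf
  have hρrpow_pos : (0:ℝ) < ρ ^ ((-2:ℝ) - ε) := Real.rpow_pos_of_pos hρ0 _
  have hηρ : η ≤ C * 2 ^ ((2:ℝ) + ε) * ρ ^ ((-2:ℝ) - ε) := by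
    rw [hηdef]
    calc C * ‖x‖ ^ ((-2:ℝ) - ε) ≤ C * (2 ^ ((2:ℝ) + ε) * ρ ^ ((-2:ℝ) - ε)) :=
        mul_le_mul_of_nonneg_left hkey hC.le
      _ = C * 2 ^ ((2:ℝ) + ε) * ρ ^ ((-2:ℝ) - ε) := by ring
  have h2pow1 : (1:ℝ) ≤ (2:ℝ) ^ ((2:ℝ) + ε) := by
    apply Real.one_le_rpow (by norm_num) (by linarith)
  constructor
  · -- first estimate
    intro i
    rw [← hPdef]
    have hνi : ν x i = u i / Q := by rw [hνx]
    have hfP : f x = P^2 := hP2.symm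
    have hw8 : |u i - 𝔯 x i / f x| ≤ 8 * η := hw i
    have hnum : |u i * P - 𝔯 x i * Q| ≤ 60 * η := by
      have e : u i * P - 𝔯 x i * Q = 𝔯 x i * (1 - P*Q) / P + P * (u i - 𝔯 x i / f x) := by
        rw [hfP]; field_simp; ring
      rw [e]
      have hA : |𝔯 x i * (1 - P*Q) / P| ≤ 50 * η := by
        rw [abs_div, abs_of_pos hP0, abs_mul]
        have hh : |𝔯 x i| * |1 - P*Q| ≤ 1 * (40*η) := by
          apply mul_le_mul (hrb i) ?_ (abs_nonneg _) (by norm_num)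
          rw [abs_sub_comm]; exact hPQ
        calc |𝔯 x i| * |1 - P*Q| / P ≤ (1 * (40*η)) / (4/5) := by gcongr
          _ = 50 * η := by ring
      have hB' : |P * (u i - 𝔯 x i / f x)| ≤ 10 * η := by
        rw [abs_mul, abs_of_pos hP0]
        calc P * |u i - 𝔯 x i / f x| ≤ (6/5) * (8 * η) :=
            mul_le_mul hPu hw8 (abs_nonneg _) (by norm_num)
          _ ≤ 10 * η := by linarith
      calc |𝔯 x i * (1 - P*Q) / P + P * (u i - 𝔯 x i / f x)|
          ≤ |𝔯 x i * (1 - P*Q) / P| + |P * (u i - 𝔯 x i / f x)| := abs_add_le _ _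
        _ ≤ 60 * η := by linarith
    have hdiff : u i / Q - 𝔯 x i / P = (u i * P - 𝔯 x i * Q) / (P * Q) := by
      field_simp
    have hPQpos : (0:ℝ) < P * Q := by positivity
    have hPQlb : (14/25 : ℝ) ≤ P * Q := by nlinarith
    have hest : |ν x i - 𝔯 x i / P| ≤ 120 * η := by
      rw [hνi, hdiff, abs_div, abs_of_pos hPQpos]
      calc |u i * P - 𝔯 x i * Q| / (P * Q) ≤ (60 * η) / (14/25) := by gcongr
        _ ≤ 120 * η := by rw [div_le_iff₀ (by norm_num : (0:ℝ) < 14/25)]; nlinarith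
    refine hest.trans ?_
    have hTT : (0:ℝ) ≤ 2 ^ ((2:ℝ) + ε) * ρ ^ ((-2:ℝ) - ε) := by positivity
    calc (120:ℝ) * η ≤ 120 * (C * 2 ^ ((2:ℝ) + ε) * ρ ^ ((-2:ℝ) - ε)) := by linarith
      _ = (120 * C) * (2 ^ ((2:ℝ) + ε) * ρ ^ ((-2:ℝ) - ε)) := by ring
      _ ≤ (1000 * (C + 1)) * (2 ^ ((2:ℝ) + ε) * ρ ^ ((-2:ℝ) - ε)) :=
          mul_le_mul_of_nonneg_right (by linarith) hTT
      _ = 1000 * (C + 1) * (2:ℝ) ^ ((2:ℝ) + ε) * ρ ^ ((-2:ℝ) - ε) := by ring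
  · -- second estimate
    rw [← hPdef]
    have hνfun : ν x = Q⁻¹ • u := by
      rw [hνx]
      funext i
      simp [div_eq_inv_mul]
    have hgν : g x *ᵥ ν x = Q⁻¹ • 𝔯 x := by
      rw [hνfun, Matrix.mulVec_smul, hgu]
    have hsum2 : ∑ i, (x i - a i) * (g x *ᵥ ν x) i = Q⁻¹ * ρ := by
      rw [hgν]
      have e : ∀ i, (x i - a i) * (Q⁻¹ • 𝔯 x) i = Q⁻¹ * ((x i - a i) * 𝔯 x i) := by
        intro i; simp only [Pi.smul_apply, smul_eq_mul]; ring
      rw [Finset.sum_congr rfl fun i _ => e i, ← Finset.mul_sum, hsum_xr]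
    rw [hsum2]
    have e2 : Q⁻¹ * ρ - P * ρ = ((1 - P*Q)/Q) * ρ := by field_simp
    rw [e2, abs_mul, abs_of_pos hρ0, abs_div, abs_of_pos hQ0, abs_sub_comm]
    have h1 : |P*Q - 1| / Q ≤ 60 * η := by
      calc |P*Q - 1| / Q ≤ (40*η) / (7/10) := by gcongr
        _ ≤ 60 * η := by rw [div_le_iff₀ (by norm_num : (0:ℝ) < 7/10)]; linarith
    have s1 : |P*Q - 1| / Q * ρ ≤ 60 * η * ρ := mul_le_mul_of_nonneg_right h1 hρ0.le
    have s2 : 60 * η * ρ ≤ 60 * (C * 2 ^ ((2:ℝ) + ε) * ρ ^ ((-2:ℝ) - ε)) * ρ := by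
      apply mul_le_mul_of_nonneg_right ?_ hρ0.le
      linarith
    have s3 : 60 * (C * 2 ^ ((2:ℝ) + ε) * ρ ^ ((-2:ℝ) - ε)) * ρ
        = 60 * C * 2 ^ ((2:ℝ) + ε) * ρ ^ ((-1:ℝ) - ε) := by
      rw [← hρmul]; ring
    have s4 : 60 * C * 2 ^ ((2:ℝ) + ε) * ρ ^ ((-1:ℝ) - ε)
        ≤ 1000 * (C + 1) * (2:ℝ) ^ ((2:ℝ) + ε) * ρ ^ ((-1:ℝ) - ε) := by
      have hTT : (0:ℝ) ≤ 2 ^ ((2:ℝ) + ε) * ρ ^ ((-1:ℝ) - ε) := by positivity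
      calc 60 * C * 2 ^ ((2:ℝ) + ε) * ρ ^ ((-1:ℝ) - ε)
          = (60 * C) * (2 ^ ((2:ℝ) + ε) * ρ ^ ((-1:ℝ) - ε)) := by ring
        _ ≤ (1000 * (C + 1)) * (2 ^ ((2:ℝ) + ε) * ρ ^ ((-1:ℝ) - ε)) :=
            mul_le_mul_of_nonneg_right (by linarith) hTT
        _ = 1000 * (C + 1) * (2:ℝ) ^ ((2:ℝ) + ε) * ρ ^ ((-1:ℝ) - ε) := by ring
    exact s1.trans (s2.trans (s3 ▸ s4))
end
end

section
/- The tangential part (with respect to g) of the radial field X(x) = x − a along the Euclidean sphere {y : |y−a| = ρ} decays: X^⊤(x) := (x−a) − ((x−a)ᵀ g(x) ν(x)) ν(x) satisfies |X^⊤(x)| ≤ C' |x|^{−1−ε} for all large |x| and some constant C', where ν(x) = g(x)⁻¹𝔯 / √(𝔯ᵀ g(x)⁻¹ 𝔯) and 𝔯 = (x−a)/|x−a|. -/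
open Real Matrix

noncomputable section

namespace TRFD

def N (v : Fin 3 → ℝ) : ℝ := Real.sqrt (∑ i, v i ^ 2)

lemma N_nonneg (v : Fin 3 → ℝ) : 0 ≤ N v := Real.sqrt_nonneg _

lemma sq_N (v : Fin 3 → ℝ) : N v ^ 2 = ∑ i, v i ^ 2 :=
  Real.sq_sqrt (Finset.sum_nonneg fun i _ => sq_nonneg _)

lemma N_eq (v : Fin 3 → ℝ) :
    N v = ‖(WithLp.equiv 2 (Fin 3 → ℝ)).symm v‖ := by
  simp only [EuclideanSpace.norm_eq, Real.norm_eq_abs, sq_abs, N]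
  rfl

lemma N_add_le (v w : Fin 3 → ℝ) : N (v + w) ≤ N v + N w := by
  rw [N_eq, N_eq, N_eq]
  show ‖WithLp.toLp 2 (v + w)‖ ≤ ‖WithLp.toLp 2 v‖ + ‖WithLp.toLp 2 w‖
  rw [WithLp.toLp_add]
  exact norm_add_le _ _

lemma N_smul (c : ℝ) (v : Fin 3 → ℝ) : N (c • v) = |c| * N v := by
  rw [N_eq, N_eq]
  show ‖WithLp.toLp 2 (c • v)‖ = |c| * ‖WithLp.toLp 2 v‖
  rw [WithLp.toLp_smul, norm_smul, Real.norm_eq_abs]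

lemma abs_le_N (v : Fin 3 → ℝ) (i : Fin 3) : |v i| ≤ N v := by
  rw [← Real.sqrt_sq_eq_abs]
  exact Real.sqrt_le_sqrt (Finset.single_le_sum (fun j _ => sq_nonneg (v j)) (Finset.mem_univ i))

lemma cs (v w : Fin 3 → ℝ) : |∑ i, v i * w i| ≤ N v * N w := by
  rw [← Real.sqrt_sq_eq_abs]
  have h := Finset.sum_mul_sq_le_sq_mul_sq Finset.univ v w
  calc Real.sqrt ((∑ i, v i * w i) ^ 2) ≤ Real.sqrt ((∑ i, v i ^ 2) * ∑ i, w i ^ 2) :=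
        Real.sqrt_le_sqrt h
    _ = N v * N w := by rw [Real.sqrt_mul (Finset.sum_nonneg fun i _ => sq_nonneg _)]; rfl

lemma N_le_of_bdd {v : Fin 3 → ℝ} {A : ℝ} (hA : 0 ≤ A) (h : ∀ i, |v i| ≤ A) :
    N v ≤ 2 * A := by
  have : ∑ i, v i ^ 2 ≤ (2 * A) ^ 2 := by
    have : ∀ i : Fin 3, v i ^ 2 ≤ A ^ 2 := fun i => by
      rw [← sq_abs]; exact pow_le_pow_left₀ (abs_nonneg _) (h i) 2
    calc ∑ i, v i ^ 2 ≤ ∑ _i : Fin 3, A ^ 2 :=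
          Finset.sum_le_sum fun i _ => this i
      _ = 3 * A ^ 2 := by simp [Finset.sum_const]; try ring
      _ ≤ (2 * A) ^ 2 := by nlinarith
  calc N v ≤ Real.sqrt ((2 * A) ^ 2) := Real.sqrt_le_sqrt this
    _ = 2 * A := Real.sqrt_sq (by positivity)

lemma normsq (y : EuclideanSpace ℝ (Fin 3)) : ∑ i, y i ^ 2 = ‖y‖ ^ 2 := by
  rw [EuclideanSpace.norm_eq, Real.sq_sqrt (Finset.sum_nonneg fun i _ => sq_nonneg _)]
  refine Finset.sum_congr rfl fun i _ => ?_
  rw [Real.norm_eq_abs, sq_abs]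

lemma N_coord (y : EuclideanSpace ℝ (Fin 3)) : N (fun i => y i) = ‖y‖ := by
  rw [N, normsq, Real.sqrt_sq (norm_nonneg _)]

end TRFD

set_option maxHeartbeats 2000000 in
/-- the tangential (with respect to `g`) part
`X^⊤ = (x−a) − ((x−a)ᵀ g ν) ν` of the radial field `X = x − a` along the Euclidean sphere
`{|y − a| = ρ}` satisfies `|X^⊤(x)| ≤ C' |x|^{−1−ε}` for all large `|x|`. -/
theorem tangential_radial_field_decay
    (m γ₁ γ₂ : ℝ) (a c : E3) (ε : ℝ) (hε : 0 ≤ ε)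
    (f : E3 → ℝ)
    (hf : ∀ x : E3,
      f x = 1 + 2 * m / ‖x‖ + γ₁ * (∑ i, c i * x i) / ‖x‖ ^ 3 + γ₂ / ‖x‖ ^ 2)
    (p : E3 → Matrix (Fin 3) (Fin 3) ℝ)
    (hpsym : ∀ x : E3, 1 < ‖x‖ → (p x).IsSymm)
    (hpC1 : ∀ i j, ContDiffOn ℝ 1 (fun x => p x i j) {x : E3 | 1 < ‖x‖})
    (C : ℝ) (hC : 0 < C)
    (hp0 : ∀ x : E3, 1 < ‖x‖ → ∀ i j, |p x i j| ≤ C * ‖x‖ ^ (-2 - ε))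
    (g : E3 → Matrix (Fin 3) (Fin 3) ℝ)
    (hg : ∀ x : E3, g x = f x • (1 : Matrix (Fin 3) (Fin 3) ℝ) + p x)
    (𝔯 : E3 → Fin 3 → ℝ)
    (h𝔯 : ∀ x : E3, 𝔯 x = fun i => (x i - a i) / ‖x - a‖)
    (ν : E3 → Fin 3 → ℝ)
    (hν : ∀ x : E3, ν x = fun i =>
      ((g x)⁻¹ *ᵥ 𝔯 x) i / Real.sqrt (∑ j, 𝔯 x j * ((g x)⁻¹ *ᵥ 𝔯 x) j))
    (Xt : E3 → Fin 3 → ℝ)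
    (hXt : ∀ x : E3, Xt x = fun i =>
      (x i - a i) - (∑ j, (x j - a j) * ((g x) *ᵥ ν x) j) * ν x i) :
    ∃ C' R : ℝ, ∀ x : E3, R ≤ ‖x‖ →
      Real.sqrt (∑ i, (Xt x i) ^ 2) ≤ C' * ‖x‖ ^ (-1 - ε) := by
  classical
  set B : ℝ := 2 * |m| + |γ₁| * ‖c‖ + |γ₂| with hBdef
  have hB0 : 0 ≤ B := by positivity
  refine ⟨1152 * C, 2 + 2 * B + ‖a‖ + 72 * C, fun x hx => ?_⟩
  have ha0 : (0:ℝ) ≤ ‖a‖ := norm_nonneg a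
  have hx2 : 2 ≤ ‖x‖ := by nlinarith
  have hx1 : 1 < ‖x‖ := by linarith
  have hx0 : 0 < ‖x‖ := by linarith
  have hxB : 2 * B ≤ ‖x‖ := by nlinarith
  have hxC : 72 * C ≤ ‖x‖ := by nlinarith
  have hxa : ‖a‖ + 2 ≤ ‖x‖ := by nlinarith
  -- norm of x - a
  have hxa0 : 0 < ‖x - a‖ := by
    have h1 : ‖x‖ - ‖a‖ ≤ ‖x - a‖ := norm_sub_norm_le x a
    linarith
  have hxa2 : ‖x - a‖ ≤ 2 * ‖x‖ := by
    have h1 : ‖x - a‖ ≤ ‖x‖ + ‖a‖ := norm_sub_le x a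
    linarith
  -- bounds on f
  have hcs : |∑ i, c i * x i| ≤ ‖c‖ * ‖x‖ := by
    have h := TRFD.cs (fun i => c i) (fun i => x i)
    rwa [TRFD.N_coord, TRFD.N_coord] at h
  have hfab : |f x - 1| ≤ B / ‖x‖ := by
    rw [hf x]
    have e : 1 + 2 * m / ‖x‖ + γ₁ * (∑ i, c i * x i) / ‖x‖ ^ 3 + γ₂ / ‖x‖ ^ 2 - 1
        = (2 * m) / ‖x‖ + (γ₁ * (∑ i, c i * x i)) / ‖x‖ ^ 3 + γ₂ / ‖x‖ ^ 2 := by ring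
    rw [e]
    have h1 : |(2 * m) / ‖x‖ + (γ₁ * (∑ i, c i * x i)) / ‖x‖ ^ 3 + γ₂ / ‖x‖ ^ 2|
        ≤ |(2 * m) / ‖x‖| + |(γ₁ * (∑ i, c i * x i)) / ‖x‖ ^ 3| + |γ₂ / ‖x‖ ^ 2| := by
      calc _ ≤ |(2 * m) / ‖x‖ + (γ₁ * (∑ i, c i * x i)) / ‖x‖ ^ 3| + |γ₂ / ‖x‖ ^ 2| :=
            abs_add_le _ _
        _ ≤ _ := by gcongr; exact abs_add_le _ _
    have e1 : |(2 * m) / ‖x‖| = 2 * |m| / ‖x‖ := by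
      rw [abs_div, abs_mul, abs_of_pos hx0, abs_two]
    have e2 : |(γ₁ * (∑ i, c i * x i)) / ‖x‖ ^ 3| ≤ (|γ₁| * ‖c‖) / ‖x‖ := by
      rw [abs_div, abs_mul, abs_pow, abs_of_pos hx0]
      rw [div_le_div_iff₀ (by positivity) hx0]
      have hcc : |γ₁| * |∑ i, c i * x i| ≤ |γ₁| * (‖c‖ * ‖x‖) :=
        mul_le_mul_of_nonneg_left hcs (abs_nonneg _)
      have t1 : |γ₁| * |∑ i, c i * x i| * ‖x‖ ≤ |γ₁| * (‖c‖ * ‖x‖) * ‖x‖ :=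
        mul_le_mul_of_nonneg_right hcc hx0.le
      have t3 : ‖x‖ ^ 2 ≤ ‖x‖ ^ 3 := by nlinarith
      nlinarith [t1, t3, mul_nonneg (abs_nonneg γ₁) (norm_nonneg c)]
    have e3 : |γ₂ / ‖x‖ ^ 2| ≤ |γ₂| / ‖x‖ := by
      rw [abs_div, abs_pow, abs_of_pos hx0]
      rw [div_le_div_iff₀ (by positivity) hx0]
      have t4 : (0:ℝ) ≤ ‖x‖ ^ 2 - ‖x‖ := by nlinarith
      nlinarith [mul_nonneg (abs_nonneg γ₂) t4]
    calc |(2 * m) / ‖x‖ + (γ₁ * (∑ i, c i * x i)) / ‖x‖ ^ 3 + γ₂ / ‖x‖ ^ 2|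
        ≤ 2 * |m| / ‖x‖ + (|γ₁| * ‖c‖) / ‖x‖ + |γ₂| / ‖x‖ := by
          rw [← e1]; linarith
      _ = B / ‖x‖ := by rw [hBdef]; ring
  have hBx : B / ‖x‖ ≤ 1 / 2 := by
    rw [div_le_iff₀ hx0]; linarith
  have hflb : 1 / 2 ≤ f x := by
    have := abs_le.mp hfab; cases this with
    | intro h1 h2 => linarith
  have hfub : f x ≤ 3 / 2 := by
    have := abs_le.mp hfab; cases this with
    | intro h1 h2 => linarith
  have hf0 : 0 < f x := by linarith
  -- the rescaled radial vector
  set r := 𝔯 x with hrdef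
  have hrfun : r = fun i => (x i - a i) / ‖x - a‖ := h𝔯 x
  have hsq : ∑ j, (x j - a j) ^ 2 = ‖x - a‖ ^ 2 := by
    have h := TRFD.normsq (x - a)
    simpa using h
  have hrsum : ∑ i, r i ^ 2 = 1 := by
    rw [hrfun]
    have e : ∑ i, ((x i - a i) / ‖x - a‖) ^ 2 = (∑ i, (x i - a i) ^ 2) / ‖x - a‖ ^ 2 := by
      rw [Finset.sum_div]; exact Finset.sum_congr rfl fun i _ => by rw [div_pow]
    rw [e, hsq, div_self (by positivity)]
  have hNr : TRFD.N r = 1 := by rw [TRFD.N, hrsum, Real.sqrt_one]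
  -- the perturbation bound
  set δ := 9 * C * ‖x‖ ^ (-2 - ε) with hδdef
  have hδ0 : 0 < δ := by positivity
  have hrp : ‖x‖ ^ (-2 - ε) ≤ ‖x‖⁻¹ := by
    rw [← Real.rpow_neg_one]
    exact Real.rpow_le_rpow_of_exponent_le hx1.le (by linarith)
  have hδ18 : δ ≤ 1 / 8 := by
    have h1 : δ ≤ 9 * C * ‖x‖⁻¹ := by
      rw [hδdef]; exact mul_le_mul_of_nonneg_left hrp (by positivity)
    have h2 : 9 * C * ‖x‖⁻¹ ≤ 1 / 8 := by
      rw [mul_inv_le_iff₀ hx0]; linarith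
    linarith
  have hPbd : ∀ v : Fin 3 → ℝ, TRFD.N ((p x) *ᵥ v) ≤ δ * TRFD.N v := by
    intro v
    have hent : ∀ i, |((p x) *ᵥ v) i| ≤ 3 * C * ‖x‖ ^ (-2 - ε) * TRFD.N v := by
      intro i
      have e : ((p x) *ᵥ v) i = ∑ j, p x i j * v j := rfl
      rw [e]
      calc |∑ j, p x i j * v j| ≤ ∑ j, |p x i j * v j| := Finset.abs_sum_le_sum_abs _ _
        _ ≤ ∑ _j : Fin 3, C * ‖x‖ ^ (-2 - ε) * TRFD.N v := by
            refine Finset.sum_le_sum fun j _ => ?_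
            rw [abs_mul]
            exact mul_le_mul (hp0 x hx1 i j) (TRFD.abs_le_N v j) (abs_nonneg _) (by positivity)
        _ = 3 * C * ‖x‖ ^ (-2 - ε) * TRFD.N v := by
            rw [Finset.sum_const]; simp; ring
    have h2 := TRFD.N_le_of_bdd (v := (p x) *ᵥ v)
      (A := 3 * C * ‖x‖ ^ (-2 - ε) * TRFD.N v)
      (mul_nonneg (by positivity) (TRFD.N_nonneg v)) hent
    have h3 : (0:ℝ) ≤ C * ‖x‖ ^ (-2 - ε) * TRFD.N v :=
      mul_nonneg (by positivity) (TRFD.N_nonneg v)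
    rw [hδdef]; nlinarith
  -- positive definiteness of g x
  have hGsymm : (g x).IsSymm := by
    refine Matrix.IsSymm.ext fun i j => ?_
    rw [hg x]
    simp only [Matrix.add_apply, Matrix.smul_apply, Matrix.one_apply, smul_eq_mul]
    rw [(hpsym x hx1).apply i j]
    by_cases h : i = j
    · subst h; simp
    · simp [h, Ne.symm h]
  have hGpd : (g x).PosDef := by
    refine Matrix.PosDef.of_dotProduct_mulVec_pos ?_ ?_
    · show (g x)ᴴ = g x
      ext i j
      rw [Matrix.conjTranspose_apply, star_trivial]
      exact hGsymm.apply i j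
    · intro v hv
      have hstar : star v = v := by
        funext i; simp
      rw [hstar]
      have hGv : (g x) *ᵥ v = f x • v + (p x) *ᵥ v := by
        rw [hg x, Matrix.add_mulVec, Matrix.smul_mulVec, Matrix.one_mulVec]
      have hdot : dotProduct v ((g x) *ᵥ v)
          = f x * (∑ i, v i ^ 2) + ∑ i, v i * ((p x) *ᵥ v) i := by
        rw [hGv, dotProduct]
        have e : ∀ i, v i * ((f x • v + (p x) *ᵥ v) i)
            = f x * v i ^ 2 + v i * ((p x) *ᵥ v) i := fun i => by
          simp only [Pi.add_apply, Pi.smul_apply, smul_eq_mul]; ring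
        rw [Finset.sum_congr rfl fun i _ => e i, Finset.sum_add_distrib, ← Finset.mul_sum]
      rw [hdot]
      have hS : 0 < ∑ i, v i ^ 2 := by
        rcases Function.ne_iff.mp hv with ⟨i, hi⟩
        have hi' : v i ≠ 0 := by simpa using hi
        have h1 : 0 < v i ^ 2 := by
          rw [← sq_abs]; exact pow_pos (abs_pos.mpr hi') 2
        exact lt_of_lt_of_le h1
          (Finset.single_le_sum (fun j _ => sq_nonneg (v j)) (Finset.mem_univ i))
      have hD : |∑ i, v i * ((p x) *ᵥ v) i| ≤ δ * (∑ i, v i ^ 2) := by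
        calc |∑ i, v i * ((p x) *ᵥ v) i| ≤ TRFD.N v * TRFD.N ((p x) *ᵥ v) := TRFD.cs _ _
          _ ≤ TRFD.N v * (δ * TRFD.N v) :=
              mul_le_mul_of_nonneg_left (hPbd v) (TRFD.N_nonneg v)
          _ = δ * (TRFD.N v ^ 2) := by ring
          _ = δ * (∑ i, v i ^ 2) := by rw [TRFD.sq_N]
      have := abs_le.mp hD
      nlinarith
  have hGdet : IsUnit (g x).det := hGpd.det_pos.ne'.isUnit
  set u := (g x)⁻¹ *ᵥ r with hudef
  have hGu : (g x) *ᵥ u = r := by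
    rw [hudef, Matrix.mulVec_mulVec, Matrix.mul_nonsing_inv _ hGdet, Matrix.one_mulVec]
  have hfu : ∀ i, f x * u i = r i - ((p x) *ᵥ u) i := by
    intro i
    have hGv : (g x) *ᵥ u = f x • u + (p x) *ᵥ u := by
      rw [hg x, Matrix.add_mulVec, Matrix.smul_mulVec, Matrix.one_mulVec]
    have h := congrFun (hGv.symm.trans hGu) i
    simp only [Pi.add_apply, Pi.smul_apply, smul_eq_mul] at h
    linarith
  -- bound on u
  have hNu : TRFD.N u ≤ 4 := by
    have hvec : f x • u = r - (p x) *ᵥ u := by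
      funext i
      simp only [Pi.smul_apply, Pi.sub_apply, smul_eq_mul]
      exact hfu i
    have h1 : f x * TRFD.N u ≤ 1 + δ * TRFD.N u := by
      have e1 : f x * TRFD.N u = TRFD.N (f x • u) := by
        rw [TRFD.N_smul, abs_of_pos hf0]
      have e2 : r - (p x) *ᵥ u = r + (-(1:ℝ)) • ((p x) *ᵥ u) := by
        funext i; simp only [Pi.sub_apply, Pi.add_apply, Pi.smul_apply, smul_eq_mul]; ring
      rw [e1, hvec, e2]
      calc TRFD.N (r + (-(1:ℝ)) • ((p x) *ᵥ u))
          ≤ TRFD.N r + TRFD.N ((-(1:ℝ)) • ((p x) *ᵥ u)) := TRFD.N_add_le _ _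
        _ = 1 + TRFD.N ((p x) *ᵥ u) := by rw [hNr, TRFD.N_smul]; simp
        _ ≤ 1 + δ * TRFD.N u := by linarith [hPbd u]
    nlinarith [TRFD.N_nonneg u]
  have hNPu : TRFD.N ((p x) *ᵥ u) ≤ 4 * δ := by
    have := hPbd u
    nlinarith [TRFD.N_nonneg u]
  -- s and its bounds
  set s := ∑ j, r j * u j with hsdef
  set d := ∑ i, r i * ((p x) *ᵥ u) i with hddef
  have hdbd : |d| ≤ 4 * δ := by
    calc |d| ≤ TRFD.N r * TRFD.N ((p x) *ᵥ u) := TRFD.cs _ _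
      _ = TRFD.N ((p x) *ᵥ u) := by rw [hNr, one_mul]
      _ ≤ 4 * δ := hNPu
  have hs_eq : f x * s = 1 - d := by
    rw [hsdef, Finset.mul_sum]
    have e : ∀ j, f x * (r j * u j) = r j ^ 2 - r j * ((p x) *ᵥ u) j := fun j => by
      calc f x * (r j * u j) = r j * (f x * u j) := by ring
        _ = r j * (r j - ((p x) *ᵥ u) j) := by rw [hfu j]
        _ = r j ^ 2 - r j * ((p x) *ᵥ u) j := by ring
    rw [Finset.sum_congr rfl fun j _ => e j, Finset.sum_sub_distrib, hrsum, hddef]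
  have hs14 : 1 / 4 ≤ s := by
    have h1 : 1 / 2 ≤ f x * s := by
      have := abs_le.mp hdbd; nlinarith
    nlinarith
  have hs0 : 0 < s := by linarith
  have hsne : s ≠ 0 := ne_of_gt hs0
  have hκ0 : 0 < Real.sqrt s := Real.sqrt_pos.mpr hs0
  have hκ : (Real.sqrt s)⁻¹ * (Real.sqrt s)⁻¹ = s⁻¹ := by
    rw [← mul_inv, Real.mul_self_sqrt hs0.le]
  -- identification of ν and the key identity for Xt
  have hν' : ν x = fun i => u i / Real.sqrt s := by
    rw [hν x, ← hrdef, ← hudef, ← hsdef]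
  have hνsmul : ν x = (Real.sqrt s)⁻¹ • u := by
    rw [hν']; funext i
    simp only [Pi.smul_apply, smul_eq_mul]
    rw [div_eq_inv_mul]
  have hGν : (g x) *ᵥ ν x = (Real.sqrt s)⁻¹ • r := by
    rw [hνsmul, Matrix.mulVec_smul, hGu]
  have hT : (∑ j, (x j - a j) * ((g x) *ᵥ ν x) j) = (Real.sqrt s)⁻¹ * ‖x - a‖ := by
    rw [hGν]
    have e : ∀ j, (x j - a j) * (((Real.sqrt s)⁻¹ • r) j)
        = (Real.sqrt s)⁻¹ * ((x j - a j) ^ 2 / ‖x - a‖) := by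
      intro j
      simp only [Pi.smul_apply, smul_eq_mul]
      rw [hrfun]
      ring
    rw [Finset.sum_congr rfl fun j _ => e j, ← Finset.mul_sum, ← Finset.sum_div, hsq]
    rw [pow_two, mul_div_assoc, div_self (ne_of_gt hxa0), mul_one]
  have hXteq : Xt x = ‖x - a‖ • (r - s⁻¹ • u) := by
    funext i
    have h1 := congrFun (hXt x) i
    rw [h1, hT, hν']
    simp only [Pi.smul_apply, Pi.sub_apply, smul_eq_mul]
    rw [hrfun]
    have e1 : (Real.sqrt s)⁻¹ * ‖x - a‖ * (u i / Real.sqrt s)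
        = ‖x - a‖ * (s⁻¹ * u i) := by
      rw [div_eq_mul_inv]
      calc (Real.sqrt s)⁻¹ * ‖x - a‖ * (u i * (Real.sqrt s)⁻¹)
          = ‖x - a‖ * ((Real.sqrt s)⁻¹ * (Real.sqrt s)⁻¹ * u i) := by ring
        _ = ‖x - a‖ * (s⁻¹ * u i) := by rw [hκ]
    have e2 : ‖x - a‖ * ((x i - a i) / ‖x - a‖) = x i - a i := by
      rw [mul_comm, div_mul_cancel₀ _ (ne_of_gt hxa0)]
    rw [e1, mul_sub, e2]
  -- bound on the tangential direction
  have hw : f x • (s • r - u) = (-d) • r + (p x) *ᵥ u := by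
    funext i
    simp only [Pi.smul_apply, Pi.sub_apply, Pi.add_apply, smul_eq_mul]
    have h1 := hfu i
    have h2 := hs_eq
    calc f x * (s * r i - u i) = (f x * s) * r i - f x * u i := by ring
      _ = (1 - d) * r i - (r i - ((p x) *ᵥ u) i) := by rw [h2, h1]
      _ = -d * r i + ((p x) *ᵥ u) i := by ring
  have hNw : TRFD.N (s • r - u) ≤ 16 * δ := by
    have h1 : f x * TRFD.N (s • r - u) = TRFD.N ((-d) • r + (p x) *ᵥ u) := by
      rw [← hw, TRFD.N_smul, abs_of_pos hf0]
    have h2 : TRFD.N ((-d) • r + (p x) *ᵥ u)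
        ≤ |d| + TRFD.N ((p x) *ᵥ u) := by
      calc TRFD.N ((-d) • r + (p x) *ᵥ u)
          ≤ TRFD.N ((-d) • r) + TRFD.N ((p x) *ᵥ u) := TRFD.N_add_le _ _
        _ = |d| + TRFD.N ((p x) *ᵥ u) := by rw [TRFD.N_smul, hNr, mul_one, abs_neg]
    have h3 : f x * TRFD.N (s • r - u) ≤ 8 * δ := by
      rw [h1]; linarith
    nlinarith [TRFD.N_nonneg (s • r - u)]
  have hsub : r - s⁻¹ • u = s⁻¹ • (s • r - u) := by
    funext i
    simp only [Pi.sub_apply, Pi.smul_apply, smul_eq_mul]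
    rw [mul_sub, ← mul_assoc, inv_mul_cancel₀ hsne, one_mul]
  have hNsub : TRFD.N (r - s⁻¹ • u) ≤ 64 * δ := by
    rw [hsub, TRFD.N_smul, abs_of_pos (inv_pos.mpr hs0)]
    have hsinv : s⁻¹ ≤ 4 := by
      rw [inv_le_comm₀ hs0 (by norm_num)]
      linarith
    nlinarith [TRFD.N_nonneg (s • r - u), inv_pos.mpr hs0]
  -- conclusion
  have hgoal : TRFD.N (Xt x) ≤ 1152 * C * ‖x‖ ^ (-1 - ε) := by
    rw [hXteq, TRFD.N_smul, abs_of_pos hxa0]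
    have h1 : ‖x - a‖ * TRFD.N (r - s⁻¹ • u) ≤ (2 * ‖x‖) * (64 * δ) := by
      exact mul_le_mul hxa2 hNsub (TRFD.N_nonneg _) (by positivity)
    have h2 : (2 * ‖x‖) * (64 * δ) = 1152 * C * (‖x‖ ^ (-2 - ε) * ‖x‖) := by
      rw [hδdef]; ring
    have h3 : ‖x‖ ^ (-2 - ε) * ‖x‖ = ‖x‖ ^ (-1 - ε) := by
      rw [← Real.rpow_add_one (ne_of_gt hx0) (-2 - ε)]
      congr 1; ring
    calc ‖x - a‖ * TRFD.N (r - s⁻¹ • u) ≤ (2 * ‖x‖) * (64 * δ) := h1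
      _ = 1152 * C * ‖x‖ ^ (-1 - ε) := by rw [h2, h3]
  exact hgoal
end
end
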